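/- arXiv:1807.11224 — 4 statements merged into one kernel-verified Lean document; each statement's English description precedes it below -/
import Mathlib

section
/- Let A be a nonnegative tensor of order m and dimension n, and suppose some eigenvalue λ of A has a strictly positive eigenvector x (A x = λ x^{[m-1]}, x > 0 componentwise). Then λ = ρ(A), the spectral radius of A. -/
open scoped BigOperators

namespace TensorSR

variable {n p : ℕ}

/-- `(A x)_i` for a tensor whose rows are indexed by `Fin n` and whose
"tails" (the remaining `p` indices, so the tensor has order `p+1`) are
functions `Fin p → Fin n`.  The real entries are coerced to `ℂ`. -/
noncomputable def tApply (A : Fin n → (Fin p → Fin n) → ℝ) (x : Fin n → ℂ) (i : Fin n) : ℂ :=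
  ∑ t : Fin p → Fin n, (A i t : ℂ) * ∏ j, x (t j)

/-- `lam` is an eigenvalue of the tensor `A`: `A x = lam x^{[p]}` for some `x ≠ 0`. -/
def IsEigenvalue (A : Fin n → (Fin p → Fin n) → ℝ) (lam : ℂ) : Prop :=
  ∃ x : Fin n → ℂ, x ≠ 0 ∧ ∀ i, tApply A x i = lam * (x i) ^ p

/-- The spectral radius: the sup of moduli of eigenvalues. -/
noncomputable def specRad (A : Fin n → (Fin p → Fin n) → ℝ) : ℝ :=
  sSup {r : ℝ | ∃ lam : ℂ, IsEigenvalue A lam ∧ r = ‖lam‖}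

/-- `A` is entrywise nonnegative. -/
def Nonneg (A : Fin n → (Fin p → Fin n) → ℝ) : Prop := ∀ i t, 0 ≤ A i t

/-- Weak irreducibility: there is no nonempty proper `I ⊆ [n]` such that
`a_{i t} = 0` whenever `i ∈ I` and some entry of `t` lies outside `I`. -/
def WeaklyIrreducible (A : Fin n → (Fin p → Fin n) → ℝ) : Prop :=
  ¬ ∃ I : Set (Fin n), I.Nonempty ∧ I ≠ Set.univ ∧
      ∀ i ∈ I, ∀ t : Fin p → Fin n, (∃ j, t j ∉ I) → A i t = 0

/-- The `i`-th row sum of `A`. -/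
def rowSum (A : Fin n → (Fin p → Fin n) → ℝ) (i : Fin n) : ℝ := ∑ t, A i t

/-- `j ∈ N(i)`: some nonzero entry in row `i` involves index `j`. -/
def Nbr (A : Fin n → (Fin p → Fin n) → ℝ) (i j : Fin n) : Prop :=
  ∃ t, A i t ≠ 0 ∧ ∃ q, t q = j

end TensorSR

open TensorSR
theorem stmt5 {n m : ℕ} (hn : 0 < n) (hm : 2 ≤ m)
    (A : Fin n → (Fin (m-1) → Fin n) → ℝ) (hA : Nonneg A)
    (lam : ℝ) (x : Fin n → ℝ) (hx : ∀ i, 0 < x i)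
    (heig : ∀ i, (∑ t : Fin (m-1) → Fin n, A i t * ∏ j, x (t j)) = lam * (x i) ^ (m-1)) :
    specRad A = lam := by
  have i0 : Fin n := ⟨0, hn⟩
  -- λ ≥ 0
  have hlam0 : 0 ≤ lam := by
    have h0 := heig i0
    have hsum : 0 ≤ ∑ t : Fin (m-1) → Fin n, A i0 t * ∏ j, x (t j) :=
      Finset.sum_nonneg fun t _ => mul_nonneg (hA _ _)
        (Finset.prod_nonneg fun j _ => (hx _).le)
    rw [h0] at hsum
    by_contra h
    push_neg at h
    have := mul_neg_of_neg_of_pos h (pow_pos (hx i0) (m-1))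
    linarith
  -- λ is an eigenvalue
  have heigC : IsEigenvalue A (lam : ℂ) := by
    refine ⟨fun i => (x i : ℂ), ?_, ?_⟩
    · intro h
      have := congrFun h i0
      simp only [Pi.zero_apply, Complex.ofReal_eq_zero] at this
      exact (hx i0).ne' this
    · intro i
      unfold tApply
      have : (∑ t : Fin (m-1) → Fin n, ((A i t : ℂ)) * ∏ j, ((x (t j) : ℂ)))
          = ((∑ t : Fin (m-1) → Fin n, A i t * ∏ j, x (t j) : ℝ) : ℂ) := by
        push_cast; rfl
      rw [this, heig i]
      push_cast; rfl
  -- every eigenvalue has modulus ≤ λ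
  have hub : ∀ r ∈ {r : ℝ | ∃ μ : ℂ, IsEigenvalue A μ ∧ r = ‖μ‖},
      r ≤ lam := by
    rintro r ⟨μ, ⟨y, hy0, hyeig⟩, rfl⟩
    obtain ⟨i, -, hi⟩ := Finset.exists_max_image Finset.univ
      (fun j => ‖y j‖ / x j) ⟨i0, Finset.mem_univ _⟩
    set c := ‖y i‖ / x i with hc
    have hcx : ∀ j, ‖y j‖ ≤ c * x j := fun j =>
      (div_le_iff₀ (hx j)).1 (hi j (Finset.mem_univ _))
    have hc0 : 0 < c := by
      obtain ⟨j, hj⟩ : ∃ j, y j ≠ 0 := by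
        by_contra h; push_neg at h; exact hy0 (funext h)
      have h1 : 0 < ‖y j‖ := norm_pos_iff.mpr hj
      calc 0 < ‖y j‖ / x j := div_pos h1 (hx j)
        _ ≤ c := hi j (Finset.mem_univ _)
    have hyi : ‖y i‖ = c * x i := (div_mul_cancel₀ _ (hx i).ne').symm
    have hbound : ‖tApply A y i‖
        ≤ c ^ (m-1) * (lam * x i ^ (m-1)) := by
      calc ‖tApply A y i‖
          ≤ ∑ t : Fin (m-1) → Fin n, ‖(A i t : ℂ) * ∏ j, y (t j)‖ :=
            norm_sum_le _ _
        _ ≤ ∑ t : Fin (m-1) → Fin n, A i t * (c ^ (m-1) * ∏ j, x (t j)) := by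
            refine Finset.sum_le_sum fun t _ => ?_
            rw [norm_mul, norm_prod, Complex.norm_real, Real.norm_eq_abs, abs_of_nonneg (hA i t)]
            refine mul_le_mul_of_nonneg_left ?_ (hA i t)
            calc (∏ j, ‖y (t j)‖)
                ≤ ∏ j, c * x (t j) :=
                  Finset.prod_le_prod (fun j _ => norm_nonneg _)
                    (fun j _ => hcx (t j))
              _ = c ^ (m-1) * ∏ j, x (t j) := by
                  rw [Finset.prod_mul_distrib, Finset.prod_const, Finset.card_univ,
                    Fintype.card_fin]
        _ = c ^ (m-1) * ∑ t : Fin (m-1) → Fin n, A i t * ∏ j, x (t j) := by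
            rw [Finset.mul_sum]; exact Finset.sum_congr rfl fun t _ => by ring
        _ = c ^ (m-1) * (lam * x i ^ (m-1)) := by rw [heig i]
    have hL : ‖tApply A y i‖ = ‖μ‖ * (c * x i) ^ (m-1) := by
      rw [hyeig i, norm_mul, norm_pow, hyi]
    have hpos : 0 < (c * x i) ^ (m-1) := pow_pos (mul_pos hc0 (hx i)) (m-1)
    have hfin : ‖μ‖ * (c * x i) ^ (m-1) ≤ lam * (c * x i) ^ (m-1) := by
      rw [← hL]
      calc ‖tApply A y i‖ ≤ c ^ (m-1) * (lam * x i ^ (m-1)) := hbound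
        _ = lam * (c * x i) ^ (m-1) := by rw [mul_pow]; ring
    exact le_of_mul_le_mul_right hfin hpos
  -- conclude
  have hmem : lam ∈ {r : ℝ | ∃ μ : ℂ, IsEigenvalue A μ ∧ r = ‖μ‖} :=
    ⟨(lam : ℂ), heigC, by rw [Complex.norm_real, Real.norm_eq_abs, abs_of_nonneg hlam0]⟩
  exact le_antisymm (csSup_le ⟨lam, hmem⟩ hub)
    (le_csSup ⟨lam, fun r hr => hub r hr⟩ hmem)
end

section
/- Let A be a nonnegative tensor of order m and dimension n. Then min_i r_i(A) ≤ ρ(A) ≤ max_i r_i(A), where r_i(A) is the i-th row sum. Moreover if A is weakly irreducible, equality on either side holds if and only if all row sums are equal. -/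
open scoped BigOperators

namespace TensorSR

variable {n p : ℕ}

/-! ### Auxiliary development -/

/-- Real version of `tApply`. -/
def rApply (A : Fin n → (Fin p → Fin n) → ℝ) (x : Fin n → ℝ) (i : Fin n) : ℝ :=
  ∑ t : Fin p → Fin n, A i t * ∏ j, x (t j)

/-- Feasible pairs for the Collatz–Wielandt characterization. -/
def Feas (A : Fin n → (Fin p → Fin n) → ℝ) (r : ℝ) (x : Fin n → ℝ) : Prop :=
  (∀ i, 0 ≤ x i) ∧ (∑ i, x i = 1) ∧ ∀ i, r * x i ^ p ≤ rApply A x i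

def K (A : Fin n → (Fin p → Fin n) → ℝ) : Set (ℝ × (Fin n → ℝ)) :=
  {q | 0 ≤ q.1 ∧ Feas A q.1 q.2}

section basic

variable {A : Fin n → (Fin p → Fin n) → ℝ} {x y : Fin n → ℝ} {r : ℝ}

lemma rApply_nonneg (hA : Nonneg A) (hx : ∀ i, 0 ≤ x i) (i : Fin n) :
    0 ≤ rApply A x i := by
  refine Finset.sum_nonneg fun t _ => mul_nonneg (hA i t) (Finset.prod_nonneg fun j _ => hx _)

lemma rApply_mono (hA : Nonneg A) (hx : ∀ i, 0 ≤ x i) (hxy : ∀ i, x i ≤ y i) (i : Fin n) :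
    rApply A x i ≤ rApply A y i := by
  refine Finset.sum_le_sum fun t _ => ?_
  refine mul_le_mul_of_nonneg_left (Finset.prod_le_prod (fun j _ => hx _) fun j _ => hxy _) (hA i t)

lemma rApply_smul (A : Fin n → (Fin p → Fin n) → ℝ) (c : ℝ) (x : Fin n → ℝ) (i : Fin n) :
    rApply A (fun j => c * x j) i = c ^ p * rApply A x i := by
  unfold rApply
  rw [Finset.mul_sum]
  refine Finset.sum_congr rfl fun t _ => ?_
  rw [Finset.prod_mul_distrib, Finset.prod_const]
  simp [Finset.card_univ]
  ring

lemma rApply_mono_tensor {B : Fin n → (Fin p → Fin n) → ℝ} (hx : ∀ i, 0 ≤ x i)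
    (hAB : ∀ i t, A i t ≤ B i t) (i : Fin n) : rApply A x i ≤ rApply B x i := by
  refine Finset.sum_le_sum fun t _ => ?_
  exact mul_le_mul_of_nonneg_right (hAB i t) (Finset.prod_nonneg fun j _ => hx _)

lemma prod_le_pow_of_le (hx : ∀ i, 0 ≤ x i) {M : ℝ} (hM : ∀ i, x i ≤ M)
    (t : Fin p → Fin n) : ∏ j, x (t j) ≤ M ^ p := by
  calc ∏ j, x (t j) ≤ ∏ _j : Fin p, M :=
        Finset.prod_le_prod (fun j _ => hx _) fun j _ => hM _
    _ = M ^ p := by simp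

/-- Any feasible value is at most the largest row sum. -/
lemma feas_le_sup (hn : 0 < n) (hA : Nonneg A) (h : Feas A r x) :
    r ≤ ⨆ i, rowSum A i := by
  haveI : Nonempty (Fin n) := Fin.pos_iff_nonempty.mp hn
  obtain ⟨hx0, hx1, hfeas⟩ := h
  -- pick the index with the largest coordinate
  obtain ⟨i, -, hi⟩ := Finset.exists_max_image Finset.univ x ⟨Classical.arbitrary _, Finset.mem_univ _⟩
  have hipos : 0 < x i := by
    by_contra hcon
    push_neg at hcon
    have : ∀ j, x j = 0 := fun j => le_antisymm (le_trans (hi j (Finset.mem_univ _)) hcon) (hx0 j)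
    simp [this] at hx1
  have h1 : r * x i ^ p ≤ rowSum A i * x i ^ p := by
    calc r * x i ^ p ≤ rApply A x i := hfeas i
      _ ≤ ∑ t : Fin p → Fin n, A i t * x i ^ p :=
          Finset.sum_le_sum fun t _ => mul_le_mul_of_nonneg_left
            (prod_le_pow_of_le hx0 (fun j => hi j (Finset.mem_univ _)) t) (hA i t)
      _ = rowSum A i * x i ^ p := by rw [rowSum, Finset.sum_mul]
  have h2 : r ≤ rowSum A i := le_of_mul_le_mul_right h1 (pow_pos hipos p)
  exact h2.trans (le_ciSup (Set.Finite.bddAbove (Set.finite_range _)) i)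

lemma abs_tApply_le (hA : Nonneg A) (y : Fin n → ℂ) (i : Fin n) :
    ‖tApply A y i‖ ≤ rApply A (fun j => ‖y j‖) i := by
  refine (norm_sum_le _ _).trans ?_
  refine Finset.sum_le_sum fun t _ => ?_
  rw [norm_mul, norm_prod, Complex.norm_real, Real.norm_of_nonneg (hA i t)]

lemma eigen_feas (hn : 0 < n) (hA : Nonneg A) {lam : ℂ} (h : IsEigenvalue A lam) :
    ∃ x, Feas A (‖lam‖) x := by
  obtain ⟨y, hy0, hy⟩ := h
  set c : ℝ := ∑ i, ‖y i‖ with hc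
  have hcnn : 0 ≤ c := Finset.sum_nonneg fun i _ => (norm_nonneg _)
  have hcpos : 0 < c := by
    rcases hcnn.lt_or_eq with h' | h'
    · exact h'
    · exfalso
      apply hy0
      funext i
      have := (Finset.sum_eq_zero_iff_of_nonneg
        (fun i _ => norm_nonneg (y i))).mp h'.symm i (Finset.mem_univ i)
      simpa using (norm_eq_zero.mp this)
  refine ⟨fun j => c⁻¹ * ‖y j‖, ⟨fun i => mul_nonneg (by positivity) (norm_nonneg _), ?_, ?_⟩⟩
  · rw [← Finset.mul_sum, ← hc, inv_mul_cancel₀ hcpos.ne']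
  · intro i
    rw [rApply_smul, mul_pow]
    have h1 : ‖lam‖ * ‖y i‖ ^ p ≤ rApply A (fun j => ‖y j‖) i := by
      calc ‖lam‖ * ‖y i‖ ^ p = ‖lam * y i ^ p‖ := by
            rw [norm_mul, norm_pow]
        _ = ‖tApply A y i‖ := by rw [hy i]
        _ ≤ _ := abs_tApply_le hA y i
    calc ‖lam‖ * (c⁻¹ ^ p * ‖y i‖ ^ p)
        = c⁻¹ ^ p * (‖lam‖ * ‖y i‖ ^ p) := by ring
      _ ≤ c⁻¹ ^ p * rApply A (fun j => ‖y j‖) i := by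
          exact mul_le_mul_of_nonneg_left h1 (by positivity)

lemma K_nonempty_uniform (hn : 0 < n) (hA : Nonneg A) :
    ((⨅ i, rowSum A i), fun _ : Fin n => (n : ℝ)⁻¹) ∈ K A := by
  haveI : Nonempty (Fin n) := Fin.pos_iff_nonempty.mp hn
  have hnn : (0:ℝ) < n := by exact_mod_cast hn
  have hrs : ∀ i, 0 ≤ rowSum A i := fun i => Finset.sum_nonneg fun t _ => hA i t
  refine ⟨le_ciInf fun i => hrs i, fun i => by positivity, ?_, ?_⟩
  · rw [Finset.sum_const, Finset.card_univ, Fintype.card_fin, nsmul_eq_mul,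
      mul_inv_cancel₀ hnn.ne']
  · intro i
    have : rApply A (fun _ => (n:ℝ)⁻¹) i = rowSum A i * ((n:ℝ)⁻¹) ^ p := by
      rw [rApply, rowSum, Finset.sum_mul]
      exact Finset.sum_congr rfl fun t _ => by rw [Finset.prod_const]; simp
    rw [this]
    exact mul_le_mul_of_nonneg_right
      (ciInf_le (Set.Finite.bddBelow (Set.finite_range _)) i) (by positivity)

lemma continuous_rApply (A : Fin n → (Fin p → Fin n) → ℝ) (i : Fin n) :
    Continuous fun x : Fin n → ℝ => rApply A x i := by
  refine continuous_finset_sum _ fun t _ => Continuous.mul continuous_const ?_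
  exact continuous_finset_prod _ fun j _ => continuous_apply (t j)

lemma K_isCompact (hn : 0 < n) (hA : Nonneg A) : IsCompact (K A) := by
  haveI : Nonempty (Fin n) := Fin.pos_iff_nonempty.mp hn
  have hclosed : IsClosed (K A) := by
    have h1 : IsClosed {q : ℝ × (Fin n → ℝ) | 0 ≤ q.1} :=
      isClosed_le continuous_const continuous_fst
    have h2 : IsClosed {q : ℝ × (Fin n → ℝ) | ∀ i, 0 ≤ q.2 i} := by
      rw [Set.setOf_forall]
      exact isClosed_iInter fun i =>
        isClosed_le continuous_const ((continuous_apply i).comp continuous_snd)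
    have h3 : IsClosed {q : ℝ × (Fin n → ℝ) | ∑ i, q.2 i = 1} := by
      refine isClosed_eq (continuous_finset_sum _ fun i _ => ?_) continuous_const
      exact (continuous_apply i).comp continuous_snd
    have h4 : IsClosed {q : ℝ × (Fin n → ℝ) | ∀ i, q.1 * q.2 i ^ p ≤ rApply A q.2 i} := by
      rw [Set.setOf_forall]
      refine isClosed_iInter fun i => isClosed_le ?_ ?_
      · exact continuous_fst.mul (((continuous_apply i).comp continuous_snd).pow p)
      · exact (continuous_rApply A i).comp continuous_snd
    have : K A = {q : ℝ × (Fin n → ℝ) | 0 ≤ q.1} ∩ ({q | ∀ i, 0 ≤ q.2 i} ∩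
        ({q | ∑ i, q.2 i = 1} ∩ {q | ∀ i, q.1 * q.2 i ^ p ≤ rApply A q.2 i})) := by
      ext q; exact Iff.rfl
    rw [this]
    exact h1.inter (h2.inter (h3.inter h4))
  have hsub : K A ⊆ (Set.Icc (0:ℝ) (⨆ i, rowSum A i)) ×ˢ
      (Set.pi Set.univ fun _ : Fin n => Set.Icc (0:ℝ) 1) := by
    rintro ⟨r, x⟩ ⟨hr0, hfeas⟩
    refine ⟨⟨hr0, feas_le_sup hn hA hfeas⟩, fun i _ => ⟨hfeas.1 i, ?_⟩⟩
    calc x i ≤ ∑ j, x j := Finset.single_le_sum (fun j _ => hfeas.1 j) (Finset.mem_univ i)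
      _ = 1 := hfeas.2.1
  exact IsCompact.of_isClosed_subset
    (isCompact_Icc.prod (isCompact_univ_pi fun _ => isCompact_Icc)) hclosed hsub

end basic

section improve

variable {A : Fin n → (Fin p → Fin n) → ℝ} {x y : Fin n → ℝ} {r : ℝ}

lemma exists_delta {ι : Type*} [Fintype ι] {f : ι → ℝ → ℝ} {v : ι → ℝ}
    (hf : ∀ a, Continuous (f a)) (h0 : ∀ a, f a 0 < v a) :
    ∃ δ : ℝ, 0 < δ ∧ ∀ a, f a δ < v a := by
  have hev : ∀ᶠ δ in nhdsWithin 0 (Set.Ioi 0), ∀ a, f a δ < v a := by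
    rw [Filter.eventually_all]
    intro a
    exact Filter.Eventually.filter_mono nhdsWithin_le_nhds
      (((hf a).continuousAt).eventually_lt continuousAt_const (h0 a))
  obtain ⟨δ, h, hδ⟩ := (hev.and self_mem_nhdsWithin).exists
  exact ⟨δ, hδ, h⟩

lemma improve_contra (hA : Nonneg A) (hmax : ∀ q ∈ K A, q.1 ≤ r) {r' : ℝ} (hr' : r < r')
    (hr'0 : 0 ≤ r') (y : Fin n → ℝ) (hy0 : ∀ i, 0 ≤ y i) (hysum : 0 < ∑ i, y i)
    (hyfeas : ∀ i, r' * y i ^ p ≤ rApply A y i) : False := by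
  set s : ℝ := ∑ i, y i with hs
  have h1 : (r', fun i => s⁻¹ * y i) ∈ K A := by
    refine ⟨hr'0, fun i => mul_nonneg (by positivity) (hy0 i), ?_, ?_⟩
    · rw [← Finset.mul_sum, ← hs, inv_mul_cancel₀ hysum.ne']
    · intro i
      rw [rApply_smul, mul_pow]
      calc r' * ((s⁻¹) ^ p * y i ^ p) = (s⁻¹) ^ p * (r' * y i ^ p) := by ring
        _ ≤ (s⁻¹) ^ p * rApply A y i :=
            mul_le_mul_of_nonneg_left (hyfeas i) (by positivity)
  exact absurd (hmax _ h1) (not_le.mpr hr')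

lemma all_strict_improve (hn : 0 < n) (hx0 : ∀ i, 0 < x i)
    (hstrict : ∀ i, r * x i ^ p < rApply A x i) :
    ∃ r' > r, ∀ i, r' * x i ^ p ≤ rApply A x i := by
  haveI : Nonempty (Fin n) := Fin.pos_iff_nonempty.mp hn
  set μ : ℝ := Finset.univ.inf' Finset.univ_nonempty (fun i => rApply A x i - r * x i ^ p) with hμ
  set M : ℝ := Finset.univ.sup' Finset.univ_nonempty x with hM
  have hμpos : 0 < μ := by
    rw [hμ, Finset.lt_inf'_iff]
    intro i _
    linarith [hstrict i]
  have hMpos : 0 < M := lt_of_lt_of_le (hx0 (Classical.arbitrary _))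
    (Finset.le_sup' x (Finset.mem_univ _))
  refine ⟨r + μ / M ^ p, lt_add_of_pos_right r (by positivity), fun i => ?_⟩
  have hxM : x i ≤ M := Finset.le_sup' x (Finset.mem_univ i)
  have h1 : μ / M ^ p * x i ^ p ≤ μ := by
    rw [div_mul_eq_mul_div, div_le_iff₀ (by positivity)]
    exact mul_le_mul_of_nonneg_left (pow_le_pow_left₀ (hx0 i).le hxM p) hμpos.le
  have h2 : μ ≤ rApply A x i - r * x i ^ p := Finset.inf'_le _ (Finset.mem_univ i)
  nlinarith [pow_pos (hx0 i) p]

lemma rApply_gain (hA : Nonneg A) (hx0 : ∀ i, 0 ≤ x i) (hxy : ∀ i, x i ≤ y i)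
    (t0 : Fin p → Fin n) (i : Fin n) :
    rApply A x i + A i t0 * (∏ j, y (t0 j) - ∏ j, x (t0 j)) ≤ rApply A y i := by
  have h1 : ∀ t : Fin p → Fin n, 0 ≤ A i t * (∏ j, y (t j) - ∏ j, x (t j)) := by
    intro t
    refine mul_nonneg (hA i t) (sub_nonneg.mpr ?_)
    exact Finset.prod_le_prod (fun j _ => hx0 _) fun j _ => hxy _
  have h2 := Finset.single_le_sum (fun t _ => h1 t) (Finset.mem_univ t0)
  have h3 : ∑ t : Fin p → Fin n, A i t * (∏ j, y (t j) - ∏ j, x (t j))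
      = rApply A y i - rApply A x i := by
    unfold rApply
    rw [← Finset.sum_sub_distrib]
    exact Finset.sum_congr rfl fun t _ => by ring
  rw [h3] at h2
  linarith

lemma coord_le_one (hx0 : ∀ i, 0 ≤ x i) (hx1 : ∑ i, x i = 1) (i : Fin n) : x i ≤ 1 := by
  rw [← hx1]
  exact Finset.single_le_sum (fun j _ => hx0 j) (Finset.mem_univ i)

lemma maximizer_eq_pos (hn : 0 < n) (hp : 0 < p) (hpos : ∀ i t, 0 < A i t)
    (hmem : (r, x) ∈ K A) (hmax : ∀ q ∈ K A, q.1 ≤ r) :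
    ∀ i, rApply A x i = r * x i ^ p := by
  haveI : Nonempty (Fin n) := Fin.pos_iff_nonempty.mp hn
  have hA : Nonneg A := fun i t => (hpos i t).le
  by_contra hcon
  push_neg at hcon
  obtain ⟨k, hk⟩ := hcon
  obtain ⟨hr0, hx0, hx1, hfeas⟩ := hmem
  have hkstrict : r * x k ^ p < rApply A x k := lt_of_le_of_ne (hfeas k) (Ne.symm hk)
  set amin : ℝ := Finset.univ.inf' Finset.univ_nonempty (fun i => A i (fun _ => k)) with hamin
  have haminpos : 0 < amin := by
    rw [hamin, Finset.lt_inf'_iff]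
    exact fun i _ => hpos i _
  have haminle : ∀ i, amin ≤ A i (fun _ => k) := fun i => Finset.inf'_le _ (Finset.mem_univ i)
  -- choose δ
  obtain ⟨δ, hδpos, hδ⟩ := exists_delta (ι := Unit)
    (f := fun _ δ => (r + amin * δ ^ p) * (x k + δ) ^ p) (v := fun _ => rApply A x k)
    (fun _ => ((continuous_const.add (continuous_const.mul (continuous_pow p))).mul
      ((continuous_const.add continuous_id).pow p)))
    (fun _ => by simpa [zero_pow hp.ne'] using hkstrict)
  have hδk := hδ ()
  set y : Fin n → ℝ := fun w => x w + if w = k then δ else 0 with hy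
  have hy0 : ∀ i, 0 ≤ y i := fun i => by
    rw [hy]; dsimp only; split <;> [linarith [hx0 i]; simpa using hx0 i]
  have hxy : ∀ i, x i ≤ y i := fun i => by
    rw [hy]; dsimp only; split <;> [linarith; simp]
  have hyk : y k = x k + δ := by rw [hy]; simp
  have hysum : ∑ i, y i = 1 + δ := by
    rw [hy, Finset.sum_add_distrib, hx1, Finset.sum_ite_eq' Finset.univ k (fun _ => δ)]
    simp
  set r' : ℝ := r + amin * δ ^ p with hr'
  have hr'pos : r < r' := by
    rw [hr']
    have : 0 < amin * δ ^ p := by positivity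
    linarith
  have hpowgain : x k ^ p + δ ^ p ≤ (x k + δ) ^ p :=
    pow_add_pow_le (hx0 k) hδpos.le hp.ne'
  have hfeas' : ∀ i, r' * y i ^ p ≤ rApply A y i := by
    intro i
    by_cases hik : i = k
    · subst hik
      rw [hyk]
      exact le_of_lt (lt_of_lt_of_le hδk (rApply_mono hA hx0 hxy i))
    · have hyi : y i = x i := by rw [hy]; simp [hik]
      have hgain := rApply_gain hA hx0 hxy (fun _ => k) i
      have hprodx : ∏ j : Fin p, x ((fun _ : Fin p => k) j) = x k ^ p := by
        simp [Finset.prod_const, Finset.card_univ]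
      have hprody : ∏ j : Fin p, y ((fun _ : Fin p => k) j) = (x k + δ) ^ p := by
        simp [hyk, Finset.prod_const, Finset.card_univ]
      rw [hprodx, hprody] at hgain
      have h5 : amin * δ ^ p ≤ A i (fun _ => k) * ((x k + δ) ^ p - x k ^ p) := by
        refine mul_le_mul (haminle i) (by linarith) (by positivity) (hA i _)
      have h6 : x i ≤ 1 := coord_le_one hx0 hx1 i
      have h7 : x i ^ p ≤ 1 := pow_le_one₀ (hx0 i) h6
      have h8 : amin * δ ^ p * x i ^ p ≤ amin * δ ^ p := by
        nlinarith [pow_nonneg (hx0 i) p]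
      rw [hyi, hr']
      calc (r + amin * δ ^ p) * x i ^ p = r * x i ^ p + amin * δ ^ p * x i ^ p := by ring
        _ ≤ rApply A x i + amin * δ ^ p := by linarith [hfeas i]
        _ ≤ rApply A y i := by linarith
  exact improve_contra hA hmax hr'pos (by positivity) y hy0 (by rw [hysum]; linarith) hfeas'

lemma exists_maximizer (hn : 0 < n) (hA : Nonneg A) :
    ∃ q : ℝ × (Fin n → ℝ), q ∈ K A ∧ ∀ q' ∈ K A, q'.1 ≤ q.1 := by
  obtain ⟨q, hqK, hq⟩ := (K_isCompact hn hA).exists_isMaxOn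
    ⟨_, K_nonempty_uniform hn hA⟩ continuous_fst.continuousOn
  exact ⟨q, hqK, fun q' hq' => hq hq'⟩

/-- For an entrywise positive tensor, there is a maximal feasible pair which is
an eigenpair. -/
lemma exists_eigenpair_pos (hn : 0 < n) (hp : 0 < p) (hpos : ∀ i t, 0 < A i t) :
    ∃ r : ℝ, ∃ x : Fin n → ℝ, (0 ≤ r) ∧ (∀ i, 0 ≤ x i) ∧ (∑ i, x i = 1) ∧
      (∀ i, rApply A x i = r * x i ^ p) ∧ ∀ q ∈ K A, q.1 ≤ r := by
  have hA : Nonneg A := fun i t => (hpos i t).le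
  obtain ⟨⟨r, x⟩, hmem, hmax⟩ := exists_maximizer hn hA
  obtain ⟨hr0, hx0, hx1, -⟩ := id hmem
  exact ⟨r, x, hr0, hx0, hx1, maximizer_eq_pos hn hp hpos hmem hmax, hmax⟩

lemma univ_strict_improve (hA : Nonneg A) (hx0 : ∀ i, 0 < x i)
    (hS : ∀ i : Fin n, r * x i ^ p < rApply A x i) (i0 : Fin n) :
    ∃ r' > r, ∃ y : Fin n → ℝ, (∀ i, 0 < y i) ∧ (0 < ∑ i, y i) ∧
      ∀ i, r' * y i ^ p ≤ rApply A y i := by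
  have hn : 0 < n := i0.pos
  haveI : Nonempty (Fin n) := Fin.pos_iff_nonempty.mp hn
  obtain ⟨r', hr', h⟩ := all_strict_improve hn hx0 hS
  exact ⟨r', hr', x, hx0, Finset.sum_pos (fun i _ => hx0 i) Finset.univ_nonempty, h⟩

lemma wi_improve (hA : Nonneg A) (hwi : WeaklyIrreducible A) :
    ∀ c : ℕ, ∀ x : Fin n → ℝ, ∀ S : Finset (Fin n), Sᶜ.card ≤ c → (∀ i, 0 < x i) →
      (∀ i, r * x i ^ p ≤ rApply A x i) → S.Nonempty →
      (∀ i ∈ S, r * x i ^ p < rApply A x i) →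
      ∃ r' > r, ∃ y : Fin n → ℝ, (∀ i, 0 < y i) ∧ (0 < ∑ i, y i) ∧
        ∀ i, r' * y i ^ p ≤ rApply A y i := by
  intro c
  induction c with
  | zero =>
    intro x S hcard hx0 hfeas hS hstrict
    obtain ⟨i0, hi0⟩ := hS
    have hSu : ∀ i, i ∈ S := by
      intro i
      by_contra h
      have h1 : i ∈ Sᶜ := Finset.mem_compl.mpr h
      have := Finset.card_pos.mpr ⟨i, h1⟩
      omega
    exact univ_strict_improve hA hx0 (fun i => hstrict i (hSu i)) i0
  | succ c ih =>
    intro x S hcard hx0 hfeas hS hstrict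
    obtain ⟨s0, hs0⟩ := hS
    by_cases hSc : Sᶜ.card = 0
    · have hSu : ∀ i, i ∈ S := by
        intro i
        by_contra h
        have h1 : i ∈ Sᶜ := Finset.mem_compl.mpr h
        have := Finset.card_pos.mpr ⟨i, h1⟩
        omega
      exact univ_strict_improve hA hx0 (fun i => hstrict i (hSu i)) s0
    · obtain ⟨i1, hi1⟩ := Finset.card_pos.mp (Nat.pos_of_ne_zero hSc)
      unfold WeaklyIrreducible at hwi
      push_neg at hwi
      obtain ⟨i, hiI, t, ⟨j0, hj0⟩, hAit⟩ := hwi (↑(Sᶜ) : Set (Fin n))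
        ⟨i1, by simpa using hi1⟩
        (by
          intro heq
          have : s0 ∈ (↑(Sᶜ) : Set (Fin n)) := heq ▸ Set.mem_univ s0
          simp only [Finset.coe_compl, Set.mem_compl_iff, Finset.mem_coe] at this
          exact this hs0)
      have hiS : i ∉ S := by simpa using hiI
      have hj0S : t j0 ∈ S := by simpa using hj0
      have hApos : 0 < A i t := lt_of_le_of_ne (hA i t) (Ne.symm hAit)
      -- choose δ
      obtain ⟨δ, hδpos, hδ⟩ := exists_delta (ι := {s // s ∈ S})
        (f := fun s δ => r * (x s.1 + δ) ^ p) (v := fun s => rApply A x s.1)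
        (fun s => continuous_const.mul ((continuous_const.add continuous_id).pow p))
        (fun s => by simpa using hstrict s.1 s.2)
      set z : Fin n → ℝ := fun w => x w + if w ∈ S then δ else 0 with hz
      have hzx : ∀ w, x w ≤ z w := fun w => by
        rw [hz]; dsimp only; split <;> linarith
      have hz0 : ∀ w, 0 < z w := fun w => lt_of_lt_of_le (hx0 w) (hzx w)
      have hzS : ∀ s ∈ S, z s = x s + δ := fun s hs => by rw [hz]; simp [hs]
      have hzNS : ∀ w, w ∉ S → z w = x w := fun w hw => by rw [hz]; simp [hw]
      have hfeasz : ∀ w, r * z w ^ p ≤ rApply A z w := by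
        intro w
        by_cases hw : w ∈ S
        · rw [hzS w hw]
          exact le_of_lt (lt_of_lt_of_le (hδ ⟨w, hw⟩)
            (rApply_mono hA (fun j => (hx0 j).le) hzx w))
        · rw [hzNS w hw]
          exact (hfeas w).trans (rApply_mono hA (fun j => (hx0 j).le) hzx w)
      have hstricti : r * z i ^ p < rApply A z i := by
        have hgain := rApply_gain hA (fun j => (hx0 j).le) hzx t i
        have hprod : ∏ j, x (t j) < ∏ j, z (t j) := by
          refine Finset.prod_lt_prod (fun j _ => hx0 (t j)) (fun j _ => hzx (t j))
            ⟨j0, Finset.mem_univ j0, ?_⟩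
          rw [hzS _ hj0S]
          linarith
        have h2 : 0 < A i t * (∏ j, z (t j) - ∏ j, x (t j)) :=
          mul_pos hApos (by linarith)
        rw [hzNS i hiS]
        calc r * x i ^ p ≤ rApply A x i := hfeas i
          _ < rApply A x i + A i t * (∏ j, z (t j) - ∏ j, x (t j)) := by linarith
          _ ≤ rApply A z i := hgain
      refine ih z (insert i S) ?_ hz0 hfeasz ⟨i, Finset.mem_insert_self i S⟩ ?_
      · rw [Finset.compl_insert, Finset.card_erase_of_mem (Finset.mem_compl.mpr hiS)]
        omega
      · intro w hw
        rcases Finset.mem_insert.mp hw with h | h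
        · subst h; exact hstricti
        · rw [hzS w h]
          exact lt_of_lt_of_le (hδ ⟨w, h⟩) (rApply_mono hA (fun j => (hx0 j).le) hzx w)

end improve

section limits

variable {A : Fin n → (Fin p → Fin n) → ℝ}

lemma rApply_add_const (A : Fin n → (Fin p → Fin n) → ℝ) (c : ℝ) (x : Fin n → ℝ) (i : Fin n) :
    rApply (fun i t => A i t + c) x i = rApply A x i + c * ∑ t : Fin p → Fin n, ∏ j, x (t j) := by
  unfold rApply
  rw [Finset.mul_sum, ← Finset.sum_add_distrib]
  exact Finset.sum_congr rfl fun t _ => by ring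

lemma rowSum_add_const (A : Fin n → (Fin p → Fin n) → ℝ) (c : ℝ) (i : Fin n) :
    rowSum (fun i t => A i t + c) i = rowSum A i + (n : ℝ) ^ p * c := by
  unfold rowSum
  rw [Finset.sum_add_distrib, Finset.sum_const, Finset.card_univ, Fintype.card_fun]
  simp [nsmul_eq_mul]

/-- **Existence of the Perron eigenpair** for an arbitrary nonnegative tensor,
obtained by perturbing to a positive tensor and passing to the limit. -/
lemma exists_eigenpair (hn : 0 < n) (hp : 0 < p) (hA : Nonneg A) :
    ∃ r : ℝ, ∃ x : Fin n → ℝ, (0 ≤ r) ∧ (∀ i, 0 ≤ x i) ∧ (∑ i, x i = 1) ∧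
      (∀ i, rApply A x i = r * x i ^ p) ∧ ∀ q ∈ K A, q.1 ≤ r := by
  haveI : Nonempty (Fin n) := Fin.pos_iff_nonempty.mp hn
  set B : ℕ → Fin n → (Fin p → Fin n) → ℝ := fun k i t => A i t + ((k : ℝ) + 1)⁻¹ with hB
  have hcpos : ∀ k : ℕ, (0:ℝ) < ((k : ℝ) + 1)⁻¹ := fun k => by positivity
  have hcle : ∀ k : ℕ, ((k : ℝ) + 1)⁻¹ ≤ 1 := fun k => by
    rw [inv_le_one_iff₀]; right; exact le_add_of_nonneg_left (Nat.cast_nonneg k)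
  have hBpos : ∀ k, ∀ i t, 0 < B k i t := fun k i t => by
    have := hA i t; have := hcpos k; rw [hB]; dsimp only; linarith
  have H : ∀ k : ℕ, ∃ r : ℝ, ∃ x : Fin n → ℝ, (0 ≤ r) ∧ (∀ i, 0 ≤ x i) ∧ (∑ i, x i = 1) ∧
      (∀ i, rApply (B k) x i = r * x i ^ p) ∧ ∀ q ∈ K (B k), q.1 ≤ r :=
    fun k => exists_eigenpair_pos hn hp (hBpos k)
  choose r x hr0 hx0 hx1 heig hmax using H
  -- uniform upper bound on r k
  set Rbig : ℝ := (⨆ i, rowSum A i) + (n : ℝ) ^ p with hRbig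
  have hrle : ∀ k, r k ≤ Rbig := by
    intro k
    have hfeas : Feas (B k) (r k) (x k) := ⟨hx0 k, hx1 k, fun i => le_of_eq (heig k i).symm⟩
    refine (feas_le_sup hn (fun i t => (hBpos k i t).le) hfeas).trans ?_
    refine ciSup_le fun i => ?_
    have h1 : rowSum (B k) i = rowSum A i + (n : ℝ) ^ p * ((k : ℝ) + 1)⁻¹ :=
      rowSum_add_const A _ i
    have h2 : rowSum A i ≤ ⨆ i, rowSum A i :=
      le_ciSup (Set.Finite.bddAbove (Set.finite_range _)) i
    have h3 : (n : ℝ) ^ p * ((k : ℝ) + 1)⁻¹ ≤ (n : ℝ) ^ p * 1 :=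
      mul_le_mul_of_nonneg_left (hcle k) (by positivity)
    rw [hRbig, h1]
    linarith
  -- compactness
  have hC : IsCompact ((Set.Icc (0:ℝ) Rbig) ×ˢ
      (Set.pi Set.univ fun _ : Fin n => Set.Icc (0:ℝ) 1)) :=
    isCompact_Icc.prod (isCompact_univ_pi fun _ => isCompact_Icc)
  have hmemC : ∀ k, (r k, x k) ∈ (Set.Icc (0:ℝ) Rbig) ×ˢ
      (Set.pi Set.univ fun _ : Fin n => Set.Icc (0:ℝ) 1) := by
    intro k
    exact ⟨⟨hr0 k, hrle k⟩, fun i _ => ⟨hx0 k i, coord_le_one (hx0 k) (hx1 k) i⟩⟩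
  obtain ⟨⟨rInf2, xInf2⟩, -, φ, hφ, hconv⟩ := hC.tendsto_subseq hmemC
  have hrconv : Filter.Tendsto (fun k => r (φ k)) Filter.atTop (nhds rInf2) :=
    (continuous_fst.tendsto _).comp hconv
  have hxconv : Filter.Tendsto (fun k => x (φ k)) Filter.atTop (nhds xInf2) :=
    (continuous_snd.tendsto _).comp hconv
  have hcconv : Filter.Tendsto (fun k => ((φ k : ℝ) + 1)⁻¹) Filter.atTop (nhds 0) := by
    have h1 : Filter.Tendsto (fun k : ℕ => ((k : ℝ) + 1)⁻¹) Filter.atTop (nhds 0) := by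
      apply Filter.Tendsto.comp tendsto_inv_atTop_zero
      exact Filter.tendsto_atTop_add_const_right _ 1 tendsto_natCast_atTop_atTop
    exact h1.comp hφ.tendsto_atTop
  refine ⟨rInf2, xInf2, ?_, ?_, ?_, ?_, ?_⟩
  · exact ge_of_tendsto' hrconv fun k => hr0 (φ k)
  · intro i
    have : Filter.Tendsto (fun k => x (φ k) i) Filter.atTop (nhds (xInf2 i)) :=
      ((continuous_apply i).tendsto _).comp hxconv
    exact ge_of_tendsto' this fun k => hx0 (φ k) i
  · have h1 : Filter.Tendsto (fun k => ∑ i, x (φ k) i) Filter.atTop (nhds (∑ i, xInf2 i)) :=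
      ((continuous_finset_sum Finset.univ fun i _ => continuous_apply i).tendsto _).comp hxconv
    have heq : (fun k => ∑ i, x (φ k) i) = fun _ : ℕ => (1:ℝ) := funext fun k => hx1 (φ k)
    rw [heq] at h1
    exact (tendsto_nhds_unique h1 tendsto_const_nhds)
  · intro i
    set g : (Fin n → ℝ) → ℝ := fun z => ∑ t : Fin p → Fin n, ∏ j, z (t j) with hg
    have hgcont : Continuous g :=
      continuous_finset_sum _ fun t _ => continuous_finset_prod _ fun j _ => continuous_apply (t j)
    have hLHS : Filter.Tendsto (fun k => rApply A (x (φ k)) i + ((φ k : ℝ) + 1)⁻¹ * g (x (φ k)))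
        Filter.atTop (nhds (rApply A xInf2 i + 0 * g xInf2)) := by
      refine Filter.Tendsto.add (((continuous_rApply A i).tendsto _).comp hxconv) ?_
      exact Filter.Tendsto.mul hcconv ((hgcont.tendsto _).comp hxconv)
    have hRHS : Filter.Tendsto (fun k => r (φ k) * x (φ k) i ^ p)
        Filter.atTop (nhds (rInf2 * xInf2 i ^ p)) := by
      refine Filter.Tendsto.mul hrconv ?_
      exact (((continuous_apply i).tendsto _).comp hxconv).pow p
    have heq : (fun k => rApply A (x (φ k)) i + ((φ k : ℝ) + 1)⁻¹ * g (x (φ k)))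
        = fun k => r (φ k) * x (φ k) i ^ p := by
      funext k
      rw [hg, ← rApply_add_const]
      exact heig (φ k) i
    rw [heq] at hLHS
    have := tendsto_nhds_unique hLHS hRHS
    linarith
  · rintro ⟨s, z⟩ hq
    obtain ⟨hs0, hz0, hz1, hzfeas⟩ := hq
    have hmem : ∀ k, (s, z) ∈ K (B k) := by
      intro k
      refine ⟨hs0, hz0, hz1, fun i => (hzfeas i).trans ?_⟩
      refine rApply_mono_tensor hz0 (fun i t => ?_) i
      rw [hB]; dsimp only; linarith [hcpos k]
    exact ge_of_tendsto' hrconv fun k => hmax (φ k) _ (hmem (φ k))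

end limits

section spec

variable {A : Fin n → (Fin p → Fin n) → ℝ} {x : Fin n → ℝ} {r : ℝ}

/-- A real eigenpair gives a complex eigenvalue. -/
lemma isEigenvalue_of_real (hx1 : ∑ i, x i = 1)
    (heig : ∀ i, rApply A x i = r * x i ^ p) : IsEigenvalue A (r : ℂ) := by
  refine ⟨fun i => ((x i : ℝ) : ℂ), ?_, ?_⟩
  · intro h0
    have : ∀ i, x i = 0 := by
      intro i
      have h := congrFun h0 i
      rw [Pi.zero_apply] at h
      exact_mod_cast h
    rw [Finset.sum_congr rfl fun i _ => this i] at hx1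
    simp at hx1
  · intro i
    have h1 : tApply A (fun i => ((x i : ℝ) : ℂ)) i = ((rApply A x i : ℝ) : ℂ) := by
      unfold tApply rApply
      push_cast
      rfl
    rw [h1, heig i]
    push_cast
    ring

lemma specRad_eq (hn : 0 < n) (hA : Nonneg A)
    (hr0 : 0 ≤ r) (hx1 : ∑ i, x i = 1)
    (heig : ∀ i, rApply A x i = r * x i ^ p) (hmax : ∀ q ∈ K A, q.1 ≤ r) :
    specRad A = r := by
  set SS : Set ℝ := {s : ℝ | ∃ lam : ℂ, IsEigenvalue A lam ∧ s = ‖lam‖} with hSS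
  have hmem : r ∈ SS := by
    refine ⟨(r : ℂ), isEigenvalue_of_real hx1 heig, ?_⟩
    rw [Complex.norm_real, Real.norm_of_nonneg hr0]
  have hub : ∀ s ∈ SS, s ≤ r := by
    rintro s ⟨lam, hlam, rfl⟩
    obtain ⟨z, hz⟩ := eigen_feas hn hA hlam
    exact hmax (‖lam‖, z) ⟨norm_nonneg lam, hz⟩
  exact le_antisymm (csSup_le ⟨r, hmem⟩ hub) (le_csSup ⟨r, hub⟩ hmem)

/-- Helper: the strict product bound used in the sup equality case. -/
lemma prod_lt_pow (hp : 0 < p) {M : ℝ} (hx0 : ∀ i, 0 ≤ x i) (hM : ∀ i, x i ≤ M)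
    (hMpos : 0 < M) {t : Fin p → Fin n} {j0 : Fin p} (hlt : x (t j0) < M) :
    ∏ q, x (t q) < M ^ p := by
  have h1 : x (t j0) * ∏ q ∈ Finset.univ.erase j0, x (t q) = ∏ q, x (t q) :=
    Finset.mul_prod_erase Finset.univ (fun q => x (t q)) (Finset.mem_univ j0)
  have h2 : ∏ q ∈ Finset.univ.erase j0, x (t q) ≤ M ^ (p - 1) := by
    calc ∏ q ∈ Finset.univ.erase j0, x (t q)
        ≤ ∏ _q ∈ Finset.univ.erase j0, M :=
          Finset.prod_le_prod (fun q _ => hx0 _) (fun q _ => hM _)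
      _ = M ^ (p - 1) := by
          rw [Finset.prod_const, Finset.card_erase_of_mem (Finset.mem_univ j0),
            Finset.card_univ, Fintype.card_fin]
  have h3 : 0 ≤ ∏ q ∈ Finset.univ.erase j0, x (t q) :=
    Finset.prod_nonneg fun q _ => hx0 _
  have h4 : M ^ p = M * M ^ (p - 1) := by
    conv_lhs => rw [show p = (p - 1) + 1 by omega]
    rw [pow_succ]
    ring
  rw [← h1, h4]
  have h5 : x (t j0) * ∏ q ∈ Finset.univ.erase j0, x (t q) ≤ x (t j0) * M ^ (p - 1) :=
    mul_le_mul_of_nonneg_left h2 (hx0 _)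
  have h6 : x (t j0) * M ^ (p - 1) < M * M ^ (p - 1) :=
    mul_lt_mul_of_pos_right hlt (by positivity)
  linarith

/-- In the weakly irreducible case, if the Perron value equals the largest
row sum then all row sums are equal. -/
lemma sup_case (hn : 0 < n) (hp : 0 < p) (hA : Nonneg A) (hwi : WeaklyIrreducible A)
    (hx0 : ∀ i, 0 ≤ x i) (hx1 : ∑ i, x i = 1)
    (heig : ∀ i, rApply A x i = r * x i ^ p) (hr : r = ⨆ i, rowSum A i) :
    ∀ i j, rowSum A i = rowSum A j := by
  haveI : Nonempty (Fin n) := Fin.pos_iff_nonempty.mp hn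
  set M : ℝ := Finset.univ.sup' Finset.univ_nonempty x with hM
  have hxM : ∀ i, x i ≤ M := fun i => Finset.le_sup' x (Finset.mem_univ i)
  have hMpos : 0 < M := by
    by_contra hc
    push_neg at hc
    have : ∀ i, x i = 0 := fun i => le_antisymm ((hxM i).trans hc) (hx0 i)
    rw [Finset.sum_congr rfl fun i _ => this i] at hx1
    simp at hx1
  have hrowle : ∀ i, rowSum A i ≤ r := by
    intro i
    rw [hr]
    exact le_ciSup (Set.Finite.bddAbove (Set.finite_range _)) i
  set I : Set (Fin n) := {i | x i = M} with hI
  have hIne : I.Nonempty := by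
    obtain ⟨i, -, hi⟩ := Finset.exists_mem_eq_sup' Finset.univ_nonempty x
    exact ⟨i, hi.symm⟩
  -- each term is tight on I
  have hterm : ∀ i ∈ I, ∀ t : Fin p → Fin n, A i t * (M ^ p - ∏ j, x (t j)) = 0 := by
    intro i hi t
    have hxiM : x i = M := hi
    have h1 : rApply A x i = r * M ^ p := by rw [heig i, hxiM]
    have h2 : ∑ t : Fin p → Fin n, A i t * M ^ p = rowSum A i * M ^ p := by
      rw [rowSum, Finset.sum_mul]
    have h3 : ∑ t : Fin p → Fin n, A i t * (M ^ p - ∏ j, x (t j))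
        = rowSum A i * M ^ p - rApply A x i := by
      rw [← h2, rApply, ← Finset.sum_sub_distrib]
      exact Finset.sum_congr rfl fun t _ => by ring
    have h4 : ∑ t : Fin p → Fin n, A i t * (M ^ p - ∏ j, x (t j)) ≤ 0 := by
      rw [h3, h1]
      have := hrowle i
      nlinarith [pow_pos hMpos p]
    have h5 : ∀ t ∈ Finset.univ (α := Fin p → Fin n),
        0 ≤ A i t * (M ^ p - ∏ j, x (t j)) := by
      intro t _
      refine mul_nonneg (hA i t) (sub_nonneg.mpr ?_)
      exact prod_le_pow_of_le hx0 hxM t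
    have h6 := Finset.sum_nonneg h5
    have h7 : ∑ t : Fin p → Fin n, A i t * (M ^ p - ∏ j, x (t j)) = 0 := le_antisymm h4 h6
    exact (Finset.sum_eq_zero_iff_of_nonneg h5).mp h7 t (Finset.mem_univ t)
  -- I is "closed", so by weak irreducibility I = univ
  have hIuniv : I = Set.univ := by
    by_contra hne
    refine hwi ⟨I, hIne, hne, ?_⟩
    intro i hi t ⟨j0, hj0⟩
    by_contra hA0
    have hApos : 0 < A i t := lt_of_le_of_ne (hA i t) (Ne.symm hA0)
    have hj0lt : x (t j0) < M := lt_of_le_of_ne (hxM _) hj0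
    have := hterm i hi t
    have hprod : ∏ q, x (t q) < M ^ p := prod_lt_pow hp hx0 hxM hMpos hj0lt
    nlinarith
  -- x is constant, hence all row sums equal r
  have hxconst : ∀ i, x i = M := fun i => (hIuniv ▸ Set.mem_univ i : i ∈ I)
  have hrow : ∀ i, rowSum A i = r := by
    intro i
    have h1 : rApply A x i = rowSum A i * M ^ p := by
      rw [rApply, rowSum, Finset.sum_mul]
      refine Finset.sum_congr rfl fun t _ => ?_
      rw [Finset.prod_congr rfl fun j _ => hxconst (t j), Finset.prod_const]
      simp
    have h2 := heig i
    rw [h1, hxconst i] at h2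
    have := pow_pos hMpos p
    exact mul_right_cancel₀ (by positivity) h2
  intro i j
  rw [hrow i, hrow j]

end spec

lemma rApply_uniform (A : Fin n → (Fin p → Fin n) → ℝ) (c : ℝ) (i : Fin n) :
    rApply A (fun _ => c) i = rowSum A i * c ^ p := by
  rw [rApply, rowSum, Finset.sum_mul]
  exact Finset.sum_congr rfl fun t _ => by rw [Finset.prod_const]; simp


end TensorSR

open TensorSR

theorem stmt6 {n m : ℕ} (hn : 0 < n) (hm : 2 ≤ m)
    (A : Fin n → (Fin (m-1) → Fin n) → ℝ) (hA : Nonneg A) :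
    (⨅ i, rowSum A i) ≤ specRad A ∧ specRad A ≤ (⨆ i, rowSum A i) ∧
      (WeaklyIrreducible A →
        ((specRad A = ⨅ i, rowSum A i ∨ specRad A = ⨆ i, rowSum A i) ↔
          ∀ i j : Fin n, rowSum A i = rowSum A j)) := by
  have hp : 0 < m - 1 := by omega
  haveI : Nonempty (Fin n) := Fin.pos_iff_nonempty.mp hn
  obtain ⟨r, x, hr0, hx0, hx1, heig, hmax⟩ := exists_eigenpair hn hp hA
  have hspec : specRad A = r := specRad_eq hn hA hr0 hx1 heig hmax
  have hfeas : Feas A r x := ⟨hx0, hx1, fun i => le_of_eq (heig i).symm⟩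
  have hupper : r ≤ ⨆ i, rowSum A i := feas_le_sup hn hA hfeas
  have hlower : (⨅ i, rowSum A i) ≤ r := hmax _ (K_nonempty_uniform hn hA)
  refine ⟨hspec ▸ hlower, hspec ▸ hupper, fun hwi => ⟨?_, ?_⟩⟩
  · intro hcase
    rcases hcase with hinf | hsup
    · -- specRad = ⨅ : show all row sums are equal, by contradiction
      by_contra hne
      push_neg at hne
      obtain ⟨i0, j0', hne'⟩ := hne
      have hrI : r = ⨅ i, rowSum A i := by rw [← hspec, hinf]
      have hex : ∃ k, (⨅ i, rowSum A i) < rowSum A k := by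
        by_contra hc
        push_neg at hc
        have hall : ∀ k, rowSum A k = ⨅ i, rowSum A i := fun k =>
          le_antisymm (hc k) (ciInf_le (Set.Finite.bddBelow (Set.finite_range _)) k)
        exact hne' ((hall i0).trans (hall j0').symm)
      obtain ⟨k, hk⟩ := hex
      have hnpos : (0:ℝ) < n := by exact_mod_cast hn
      have hufeas : ∀ i, (⨅ i, rowSum A i) * ((fun _ : Fin n => (n:ℝ)⁻¹) i) ^ (m-1)
          ≤ rApply A (fun _ => (n:ℝ)⁻¹) i := (K_nonempty_uniform hn hA).2.2.2
      have hustrict : ∀ i ∈ ({k} : Finset (Fin n)),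
          (⨅ i, rowSum A i) * ((fun _ : Fin n => (n:ℝ)⁻¹) i) ^ (m-1)
          < rApply A (fun _ => (n:ℝ)⁻¹) i := by
        intro i hi
        rw [Finset.mem_singleton] at hi
        subst hi
        rw [rApply_uniform]
        exact mul_lt_mul_of_pos_right hk (by positivity)
      obtain ⟨r', hr', y, hy0, hysum, hyfeas⟩ := wi_improve hA hwi (({k} : Finset (Fin n))ᶜ.card)
        (fun _ => (n:ℝ)⁻¹) {k} le_rfl (fun i => by positivity) hufeas
        ⟨k, Finset.mem_singleton_self k⟩ hustrict
      rw [← hrI] at hr'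
      have hrs0 : 0 ≤ r := hr0
      exact improve_contra hA hmax hr' (hrs0.trans hr'.le) y (fun i => (hy0 i).le) hysum hyfeas
    · exact sup_case hn hp hA hwi hx0 hx1 heig (by rw [← hspec, hsup])
  · intro hall
    right
    have hinfsup : (⨆ i, rowSum A i) ≤ ⨅ i, rowSum A i :=
      ciSup_le fun j => le_ciInf fun k => (hall j k).le
    rw [hspec]
    exact le_antisymm hupper (hinfsup.trans hlower)
end

section
/- With the notation of the bound F(i,j) = (t_i + t_j + √((t_i−t_j)² + 4 S_i S_j /(R_i R_j)^{m−1}))/2 for B = A + diag-tensor(t), if t_i + S_i/R_i^{m−1} is the same constant c for all i ∈ [n], then ρ(B) = c = F(i,j) for every pair i, j ∈ N(i); in particular both bound inequalities become equalities. -/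
open scoped BigOperators

open TensorSR

theorem stmt8 {n m : ℕ} (hn : 0 < n) (hm : 2 ≤ m)
    (A : Fin n → (Fin (m-1) → Fin n) → ℝ)
    (hA : Nonneg A) (hirr : WeaklyIrreducible A)
    (hdiag : ∀ i, A i (fun _ => i) = 0)
    (R : Fin n → ℝ) (hR : ∀ i, 0 < R i)
    (tt : Fin n → ℝ) (htt : ∀ i, 0 ≤ tt i)
    (S : Fin n → ℝ) (hS : ∀ i, S i = ∑ t : Fin (m-1) → Fin n, A i t * ∏ j, R (t j))
    (B : Fin n → (Fin (m-1) → Fin n) → ℝ)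
    (hB : ∀ i t, B i t = A i t + if (∀ q, t q = i) then tt i else 0)
    (F : Fin n → Fin n → ℝ)
    (hF : ∀ i j, F i j =
      (tt i + tt j + Real.sqrt ((tt i - tt j) ^ 2 + 4 * S i * S j / (R i * R j) ^ (m-1))) / 2)
    (c : ℝ) (hc : ∀ i, tt i + S i / R i ^ (m-1) = c) :
    specRad B = c ∧ ∀ i j : Fin n, Nbr A i j → F i j = c := by
  -- basic positivity facts
  have hRp : ∀ i, (0:ℝ) < R i ^ (m-1) := fun i => pow_pos (hR i) (m-1)
  have hSnn : ∀ i, 0 ≤ S i := by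
    intro i
    rw [hS]
    apply Finset.sum_nonneg
    intro t _
    exact mul_nonneg (hA i t) (Finset.prod_nonneg fun j _ => (hR (t j)).le)
  have hSc : ∀ i, S i = (c - tt i) * R i ^ (m-1) := by
    intro i
    have h := hc i
    have h2 : S i / R i ^ (m-1) = c - tt i := by linarith
    rw [div_eq_iff (hRp i).ne'] at h2
    exact h2
  have hcnn : 0 ≤ c := by
    have h := hc ⟨0, hn⟩
    have := htt ⟨0, hn⟩
    have := div_nonneg (hSnn ⟨0, hn⟩) (hRp ⟨0, hn⟩).le
    linarith
  have hBnn : ∀ i t, 0 ≤ B i t := by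
    intro i t
    rw [hB]
    have h : (0:ℝ) ≤ if (∀ q, t q = i) then tt i else 0 := by
      split
      · exact htt i
      · exact le_refl 0
    exact add_nonneg (hA i t) h
  -- row sums of B weighted by R
  have hrow : ∀ i, ∑ t : Fin (m-1) → Fin n, B i t * ∏ j, R (t j) = c * R i ^ (m-1) := by
    intro i
    have hsplit : ∀ t : Fin (m-1) → Fin n,
        B i t * ∏ j, R (t j)
          = A i t * ∏ j, R (t j)
            + (if t = (fun _ => i) then tt i * ∏ j, R (t j) else 0) := by
      intro t
      rw [hB, add_mul]
      congr 1
      by_cases h : ∀ q, t q = i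
      · have ht : t = fun _ => i := funext h
        simp [h, ht]
      · have ht : t ≠ fun _ => i := by
          intro hcon; exact h (fun q => by rw [hcon])
        simp [h, ht]
    rw [Finset.sum_congr rfl (fun t _ => hsplit t), Finset.sum_add_distrib]
    rw [Finset.sum_ite_eq' Finset.univ (fun _ => i)
      (fun t => tt i * ∏ j, R (t j))]
    simp only [Finset.mem_univ, if_true]
    have h1 : (∏ j : Fin (m-1), R ((fun _ => i) j)) = R i ^ (m-1) := by
      simp [Finset.prod_const]
    rw [← hS, h1, hSc i]
    ring
  -- c is an eigenvalue of B
  have heig : IsEigenvalue B (c : ℂ) := by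
    refine ⟨fun i => (R i : ℂ), ?_, ?_⟩
    · intro h
      have := congrFun h ⟨0, hn⟩
      simp only [Pi.zero_apply, Complex.ofReal_eq_zero] at this
      exact (hR ⟨0, hn⟩).ne' this
    · intro i
      unfold tApply
      have : ∀ t : Fin (m-1) → Fin n,
          (B i t : ℂ) * ∏ j, ((R (t j) : ℝ) : ℂ)
            = ((B i t * ∏ j, R (t j) : ℝ) : ℂ) := by
        intro t; push_cast; ring
      rw [Finset.sum_congr rfl (fun t _ => this t), ← Complex.ofReal_sum, hrow i]
      push_cast
      ring
  -- upper bound: every eigenvalue has modulus ≤ c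
  have hbound : ∀ lam : ℂ, IsEigenvalue B lam → ‖lam‖ ≤ c := by
    rintro lam ⟨x, hx0, hx⟩
    -- choose i maximizing |x i| / R i
    obtain ⟨i0, -, hi0⟩ := Finset.exists_max_image (Finset.univ : Finset (Fin n))
      (fun i => ‖x i‖ / R i) ⟨⟨0, hn⟩, Finset.mem_univ _⟩
    set g : ℝ := ‖x i0‖ / R i0 with hg
    have hgmax : ∀ k, ‖x k‖ ≤ g * R k := by
      intro k
      have h := hi0 k (Finset.mem_univ k)
      rw [div_le_iff₀ (hR k)] at h
      exact h
    have hgpos : 0 < g := by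
      obtain ⟨k, hk⟩ : ∃ k, x k ≠ 0 := by
        by_contra h
        push_neg at h
        exact hx0 (funext h)
      have h1 : 0 < ‖x k‖ := by
        simpa using hk
      have h2 := hi0 k (Finset.mem_univ k)
      have h3 : 0 < ‖x k‖ / R k := div_pos h1 (hR k)
      exact lt_of_lt_of_le h3 h2
    have hxi0 : ‖x i0‖ = g * R i0 := by
      rw [hg, div_mul_cancel₀ _ (hR i0).ne']
    have hxi0pos : 0 < ‖x i0‖ := by
      rw [hxi0]; exact mul_pos hgpos (hR i0)
    have key := hx i0
    have habs : ‖lam‖ * ‖x i0‖ ^ (m-1)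
        ≤ c * (g * R i0) ^ (m-1) := by
      have h1 : ‖lam * x i0 ^ (m-1)‖ = ‖lam‖ * ‖x i0‖ ^ (m-1) := by
        simp [map_mul, map_pow]
      rw [← h1, ← key]
      unfold tApply
      calc ‖∑ t : Fin (m-1) → Fin n, (B i0 t : ℂ) * ∏ j, x (t j)‖
          ≤ ∑ t : Fin (m-1) → Fin n, ‖(B i0 t : ℂ) * ∏ j, x (t j)‖ :=
            norm_sum_le _ _
        _ ≤ ∑ t : Fin (m-1) → Fin n, B i0 t * (g ^ (m-1) * ∏ j, R (t j)) := by
            apply Finset.sum_le_sum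
            intro t _
            rw [norm_mul, Complex.norm_of_nonneg (hBnn i0 t), norm_prod]
            apply mul_le_mul_of_nonneg_left _ (hBnn i0 t)
            calc (∏ j, ‖x (t j)‖) ≤ ∏ j, g * R (t j) := by
                  apply Finset.prod_le_prod
                  · intro j _; exact norm_nonneg _
                  · intro j _; exact hgmax (t j)
              _ = g ^ (m-1) * ∏ j, R (t j) := by
                  rw [Finset.prod_mul_distrib, Finset.prod_const]
                  simp
        _ = g ^ (m-1) * ∑ t : Fin (m-1) → Fin n, B i0 t * ∏ j, R (t j) := by
            rw [Finset.mul_sum]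
            apply Finset.sum_congr rfl
            intro t _; ring
        _ = c * (g * R i0) ^ (m-1) := by
            rw [hrow i0, mul_pow]; ring
    rw [hxi0] at habs
    have hpow : 0 < (g * R i0) ^ (m-1) := pow_pos (mul_pos hgpos (hR i0)) (m-1)
    exact le_of_mul_le_mul_right (by linarith [habs]) hpow
  constructor
  · -- specRad B = c
    unfold specRad
    apply le_antisymm
    · apply Real.sSup_le
      · rintro r ⟨lam, hlam, rfl⟩
        exact hbound lam hlam
      · exact hcnn
    · apply le_csSup
      · exact ⟨c, by rintro r ⟨lam, hlam, rfl⟩; exact hbound lam hlam⟩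
      · exact ⟨(c : ℂ), heig, by rw [Complex.norm_of_nonneg hcnn]⟩
  · -- F i j = c
    intro i j _
    rw [hF]
    have hsi : 0 ≤ c - tt i := by
      have := hSc i
      nlinarith [hSnn i, hRp i]
    have hsj : 0 ≤ c - tt j := by
      have := hSc j
      nlinarith [hSnn j, hRp j]
    have harg : (tt i - tt j) ^ 2 + 4 * S i * S j / (R i * R j) ^ (m-1)
        = (2 * c - tt i - tt j) ^ 2 := by
      have hx' : R i ^ (m-1) ≠ 0 := (hRp i).ne'
      have hy' : R j ^ (m-1) ≠ 0 := (hRp j).ne'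
      rw [hSc i, hSc j, mul_pow]
      field_simp
      ring
    rw [harg]
    rw [Real.sqrt_sq (by linarith)]
    ring
end

section
/- Let k ≥ 3 and H be a connected k-uniform hypergraph with degrees d_i. Then min over edges e and pairs {i,j} ⊆ e of √(d_i d_j) ≤ ρ(A(H)) ≤ max over edges e and pairs {i,j} ⊆ e of √(d_i d_j), with equality on either side if and only if H is regular. -/
open scoped BigOperators

open TensorSR

namespace HypSR

variable {n k : ℕ}

/-- Connectivity of a hypergraph with edge set `E`: every two vertices are
joined by a walk. -/
def HConnected (E : Finset (Finset (Fin n))) : Prop :=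
  ∀ u v : Fin n,
    Relation.ReflTransGen (fun a b : Fin n => ∃ e ∈ E, a ∈ e ∧ b ∈ e) u v

/-- Degree of a vertex. -/
def deg (E : Finset (Finset (Fin n))) (i : Fin n) : ℕ :=
  (E.filter (fun e => i ∈ e)).card

/-- The adjacency tensor of a `k`-uniform hypergraph: order `k`, dimension `n`,
entry `1/(k-1)!` at `(i₁,…,i_k)` when `{i₁,…,i_k}` is an edge, and `0` otherwise. -/
noncomputable def adjT (E : Finset (Finset (Fin n))) (k : ℕ) :
    Fin n → (Fin (k-1) → Fin n) → ℝ :=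
  fun i t =>
    if insert i (Finset.image t Finset.univ) ∈ E then ((k-1).factorial : ℝ)⁻¹ else 0

/-- The signless Laplacian tensor `Q = D + A`. -/
noncomputable def signlessT (E : Finset (Finset (Fin n))) (k : ℕ) :
    Fin n → (Fin (k-1) → Fin n) → ℝ :=
  fun i t => adjT E k i t + if (∀ q, t q = i) then (deg E i : ℝ) else 0

end HypSR

open HypSR


namespace HypAux

open Finset HypSR TensorSR

variable {n k : ℕ}

lemma card_image_eq_fac {p : ℕ} (S : Finset (Fin n)) (hS : S.card = p) :
    ((univ : Finset (Fin p → Fin n)).filter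
      (fun t => Finset.image t univ = S)).card = p.factorial := by
  classical
  rw [← Fintype.card_subtype]
  have e1 : {t : Fin p → Fin n // Finset.image t univ = S} ≃ (Fin p ≃ {x // x ∈ S}) := by
    refine
      { toFun := fun ⟨t, ht⟩ => Equiv.ofBijective
          (fun j => (⟨t j, by rw [← ht]; exact mem_image_of_mem t (mem_univ j)⟩ : {x // x ∈ S}))
          ?_
        invFun := fun σ => ⟨fun j => (σ j : Fin n), ?_⟩
        left_inv := ?_
        right_inv := ?_ }
    · have hinj : Function.Injective t := by
        have hc : (Finset.image t univ).card = (univ : Finset (Fin p)).card := by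
          rw [ht, hS, card_univ, Fintype.card_fin]
        have := Finset.injOn_of_card_image_eq hc
        intro a b hab
        exact this (mem_univ a) (mem_univ b) hab
      have hinj' : Function.Injective
          (fun j => (⟨t j, by rw [← ht]; exact mem_image_of_mem t (mem_univ j)⟩ :
            {x // x ∈ S})) := fun a b hab => hinj (congrArg Subtype.val hab)
      refine (Fintype.bijective_iff_injective_and_card _).2 ⟨hinj', ?_⟩
      simp [Fintype.card_coe, hS]
    · ext v
      simp only [mem_image, mem_univ, true_and]
      constructor
      · rintro ⟨j, rfl⟩; exact (σ j).2
      · intro hv; exact ⟨σ.symm ⟨v, hv⟩, by simp⟩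
    · rintro ⟨t, ht⟩; rfl
    · intro σ; ext j; simp [Equiv.ofBijective]
  rw [Fintype.card_congr e1, Fintype.card_equiv (Equiv.refl _ |>.trans ?_)]
  · simp [Fintype.card_fin]
  · exact (Fintype.equivFinOfCardEq (by simp [Fintype.card_coe, hS])).symm

lemma apply_formula {F : Type*} [Field F] [CharZero F]
    (E : Finset (Finset (Fin n))) (k : ℕ)
    (hunif : ∀ e ∈ E, e.card = k) (i : Fin n) (x : Fin n → F) :
    ∑ t : Fin (k-1) → Fin n,
      (if insert i (Finset.image t univ) ∈ E then ((k-1).factorial : F)⁻¹ else 0)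
        * ∏ j, x (t j)
    = ∑ e ∈ E.filter (fun e => i ∈ e), ∏ v ∈ e.erase i, x v := by
  classical
  have hstep : ∀ t : Fin (k-1) → Fin n,
      (if insert i (Finset.image t univ) ∈ E then ((k-1).factorial : F)⁻¹ else 0)
        * ∏ j, x (t j)
      = ∑ e ∈ E.filter (fun e => i ∈ e),
          (if Finset.image t univ = e.erase i
            then ((k-1).factorial : F)⁻¹ * ∏ j, x (t j) else 0) := by
    intro t
    by_cases h : insert i (Finset.image t univ) ∈ E
    · set e₀ := insert i (Finset.image t univ) with he₀
      have hcard : e₀.card = k := hunif _ h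
      have him : (Finset.image t univ).card ≤ k - 1 := by
        calc (Finset.image t univ).card ≤ (univ : Finset (Fin (k-1))).card :=
              Finset.card_image_le
        _ = k - 1 := by simp
      have hkk : 1 ≤ k := by
        have h0 : 0 < e₀.card := Finset.card_pos.2 ⟨i, Finset.mem_insert_self i _⟩
        omega
      have hik : i ∉ Finset.image t univ := by
        intro hi
        have : e₀ = Finset.image t univ := by
          rw [he₀, Finset.insert_eq_self.2 hi]
        rw [this] at hcard
        omega
      have himage : Finset.image t univ = e₀.erase i := by
        rw [he₀, Finset.erase_insert hik]
      rw [if_pos h]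
      rw [Finset.sum_eq_single e₀]
      · rw [if_pos himage]
      · intro e he hne
        rw [if_neg]
        intro heq
        apply hne
        have hie : i ∈ e := (Finset.mem_filter.1 he).2
        rw [he₀, heq, Finset.insert_erase hie]
      · intro habs
        exact absurd (Finset.mem_filter.2 ⟨h, Finset.mem_insert_self i _⟩) habs
    · rw [if_neg h, zero_mul]
      symm
      apply Finset.sum_eq_zero
      intro e he
      rw [if_neg]
      intro heq
      apply h
      have hie : i ∈ e := (Finset.mem_filter.1 he).2
      rw [heq, Finset.insert_erase hie]
      exact (Finset.mem_filter.1 he).1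
  rw [Finset.sum_congr rfl (fun t _ => hstep t), Finset.sum_comm]
  apply Finset.sum_congr rfl
  intro e he
  have hie : i ∈ e := (Finset.mem_filter.1 he).2
  have heE : e ∈ E := (Finset.mem_filter.1 he).1
  have hec : (e.erase i).card = k - 1 := by
    rw [Finset.card_erase_of_mem hie, hunif e heE]
  rw [← Finset.sum_filter]
  have hprod : ∀ t ∈ (univ : Finset (Fin (k-1) → Fin n)).filter
      (fun t => Finset.image t univ = e.erase i),
      ((k-1).factorial : F)⁻¹ * ∏ j, x (t j)
        = ((k-1).factorial : F)⁻¹ * ∏ v ∈ e.erase i, x v := by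
    intro t ht
    have himt : Finset.image t univ = e.erase i := (Finset.mem_filter.1 ht).2
    congr 1
    rw [← himt]
    rw [Finset.prod_image]
    intro a _ b _ hab
    have hc : (Finset.image t univ).card = (univ : Finset (Fin (k-1))).card := by
      rw [himt, hec]; simp
    exact Finset.injOn_of_card_image_eq hc (mem_univ a) (mem_univ b) hab
  rw [Finset.sum_congr rfl hprod, Finset.sum_const, card_image_eq_fac _ hec, nsmul_eq_mul]
  rw [← mul_assoc, mul_inv_cancel₀, one_mul]
  exact_mod_cast Nat.factorial_ne_zero (k-1)

lemma sum_tight {α : Type*} {s : Finset α} {f : α → ℝ} {M : ℝ}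
    (h : ∀ a ∈ s, f a ≤ M) (heq : ∑ a ∈ s, f a = s.card * M) :
    ∀ a ∈ s, f a = M := by
  by_contra hc
  push_neg at hc
  obtain ⟨a₀, ha₀, hne⟩ := hc
  have hlt : ∑ a ∈ s, f a < ∑ a ∈ s, M :=
    Finset.sum_lt_sum h ⟨a₀, ha₀, lt_of_le_of_ne (h a₀ ha₀) hne⟩
  rw [Finset.sum_const, nsmul_eq_mul] at hlt
  linarith [heq ▸ hlt]

lemma sum_tight' {α : Type*} {s : Finset α} {f : α → ℝ} {M : ℝ}
    (h : ∀ a ∈ s, M ≤ f a) (heq : ∑ a ∈ s, f a = s.card * M) :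
    ∀ a ∈ s, f a = M := by
  by_contra hc
  push_neg at hc
  obtain ⟨a₀, ha₀, hne⟩ := hc
  have hlt : ∑ a ∈ s, M < ∑ a ∈ s, f a :=
    Finset.sum_lt_sum h ⟨a₀, ha₀, lt_of_le_of_ne (h a₀ ha₀) (Ne.symm hne)⟩
  rw [Finset.sum_const, nsmul_eq_mul] at hlt
  linarith [heq ▸ hlt]

lemma prod_tight {α : Type*} {s : Finset α} {f : α → ℝ} {M : ℝ}
    (hpos : ∀ a ∈ s, 0 < f a) (h : ∀ a ∈ s, f a ≤ M)
    (heq : ∏ a ∈ s, f a = M ^ s.card) :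
    ∀ a ∈ s, f a = M := by
  by_contra hc
  push_neg at hc
  obtain ⟨a₀, ha₀, hne⟩ := hc
  have hlt : ∏ a ∈ s, f a < ∏ a ∈ s, M :=
    Finset.prod_lt_prod hpos h ⟨a₀, ha₀, lt_of_le_of_ne (h a₀ ha₀) hne⟩
  rw [Finset.prod_const] at hlt
  exact absurd (heq ▸ hlt) (lt_irrefl _)

lemma prod_tight' {α : Type*} {s : Finset α} {f : α → ℝ} {M : ℝ} (hM : 0 < M)
    (h : ∀ a ∈ s, M ≤ f a) (heq : ∏ a ∈ s, f a = M ^ s.card) :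
    ∀ a ∈ s, f a = M := by
  by_contra hc
  push_neg at hc
  obtain ⟨a₀, ha₀, hne⟩ := hc
  have hlt : ∏ a ∈ s, M < ∏ a ∈ s, f a :=
    Finset.prod_lt_prod (fun _ _ => hM) h
      ⟨a₀, ha₀, lt_of_le_of_ne (h a₀ ha₀) (Ne.symm hne)⟩
  rw [Finset.prod_const] at hlt
  exact absurd (heq ▸ hlt) (lt_irrefl _)

noncomputable def Sfun (E : Finset (Finset (Fin n))) (i : Fin n) (x : Fin n → ℝ) : ℝ :=
  ∑ e ∈ E.filter (fun e => i ∈ e), ∏ v ∈ e.erase i, x v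

noncomputable def Ffun (E : Finset (Finset (Fin n))) (x : Fin n → ℝ) : ℝ :=
  ∑ e ∈ E, ∏ v ∈ e, x v

noncomputable def proj' (v : Fin n) : (Fin n → ℝ) →L[ℝ] ℝ := ContinuousLinearMap.proj v

lemma Ffun_deriv (E : Finset (Finset (Fin n))) (x : Fin n → ℝ) :
    HasStrictFDerivAt (Ffun E)
      (∑ e ∈ E, ∑ v ∈ e, (∏ u ∈ e.erase v, x u) • proj' v) x :=
  HasStrictFDerivAt.fun_sum (fun _ _ => HasStrictFDerivAt.finset_prod
    (fun v _ => (proj' v).hasStrictFDerivAt))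

lemma gfun_deriv (x : Fin n → ℝ) :
    HasStrictFDerivAt (fun y : Fin n → ℝ => ∑ j, y j ^ k)
      (∑ j, ((k:ℝ) * x j ^ (k-1)) • proj' j) x :=
  HasStrictFDerivAt.fun_sum (fun j _ =>
    (hasStrictDerivAt_pow k (x j)).comp_hasStrictFDerivAt x (proj' j).hasStrictFDerivAt)

lemma Fderiv_apply (E : Finset (Finset (Fin n))) (x : Fin n → ℝ) (i : Fin n) :
    (∑ e ∈ E, ∑ v ∈ e, (∏ u ∈ e.erase v, x u) • proj' v) (Pi.single i 1) = Sfun E i x := by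
  classical
  rw [Sfun, Finset.sum_filter]
  rw [ContinuousLinearMap.sum_apply]
  apply Finset.sum_congr rfl
  intro e _
  rw [ContinuousLinearMap.sum_apply]
  simp only [ContinuousLinearMap.smul_apply, proj', ContinuousLinearMap.proj_apply,
    Pi.single_apply, smul_eq_mul, mul_ite, mul_one, mul_zero]
  rw [Finset.sum_ite_eq' e i (fun v => ∏ u ∈ e.erase v, x u)]

lemma gderiv_apply (x : Fin n → ℝ) (i : Fin n) :
    (∑ j, ((k:ℝ) * x j ^ (k-1)) • proj' j) (Pi.single i 1) = (k:ℝ) * x i ^ (k-1) := by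
  classical
  rw [ContinuousLinearMap.sum_apply]
  simp only [ContinuousLinearMap.smul_apply, proj', ContinuousLinearMap.proj_apply,
    Pi.single_apply, smul_eq_mul, mul_ite, mul_one, mul_zero]
  rw [Finset.sum_ite_eq' univ i (fun v => (k:ℝ) * x v ^ (k-1))]
  simp
set_option maxHeartbeats 2000000 in
lemma exists_pf (hn : 0 < n) (hk : 3 ≤ k) (E : Finset (Finset (Fin n)))
    (hunif : ∀ e ∈ E, e.card = k) (hconn : HConnected E) :
    ∃ (r : ℝ) (x : Fin n → ℝ), 0 ≤ r ∧ (∀ i, 0 < x i) ∧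
      ∀ i, Sfun E i x = r * x i ^ (k-1) := by
  classical
  by_cases hE : E = ∅
  · exact ⟨0, fun _ => 1, le_refl 0, fun _ => one_pos, fun i => by simp [Sfun, hE]⟩
  have hk0 : k ≠ 0 := by omega
  set K : Set (Fin n → ℝ) := {y | (∀ i, 0 ≤ y i) ∧ ∑ i, y i ^ k = 1} with hK
  have hKclosed : IsClosed K := by
    have h1 : IsClosed {y : Fin n → ℝ | ∀ i, 0 ≤ y i} := by
      rw [Set.setOf_forall]
      exact isClosed_iInter (fun i => isClosed_le continuous_const (continuous_apply i))
    have h2 : IsClosed {y : Fin n → ℝ | ∑ i, y i ^ k = 1} :=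
      isClosed_eq (by continuity) continuous_const
    exact h1.inter h2
  have hKbdd : Bornology.IsBounded K := by
    apply (Metric.isBounded_closedBall (x := (0 : Fin n → ℝ)) (r := 1)).subset
    intro y hy
    rw [Metric.mem_closedBall, dist_zero_right]
    rw [pi_norm_le_iff_of_nonneg zero_le_one]
    intro i
    rw [Real.norm_eq_abs, abs_of_nonneg (hy.1 i)]
    have h1 : y i ^ k ≤ 1 := by
      rw [← hy.2]
      exact Finset.single_le_sum (fun j _ => pow_nonneg (hy.1 j) k) (mem_univ i)
    exact (pow_le_one_iff_of_nonneg (hy.1 i) hk0).1 h1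
  have hKc : IsCompact K := Metric.isCompact_of_isClosed_isBounded hKclosed hKbdd
  have i₀ : Fin n := ⟨0, hn⟩
  have hKne : K.Nonempty := by
    refine ⟨fun i => if i = i₀ then 1 else 0, fun i => by positivity, ?_⟩
    have : ∀ i : Fin n, (if i = i₀ then (1:ℝ) else 0) ^ k = if i = i₀ then 1 else 0 := by
      intro i; split <;> simp [zero_pow hk0]
    simp [this]
  have hFcont : Continuous (Ffun E) :=
    continuous_finset_sum _ (fun e _ => continuous_finset_prod _ (fun v _ => continuous_apply v))
  obtain ⟨x, hxK, hmax⟩ := hKc.exists_isMaxOn hKne hFcont.continuousOn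
  -- positivity of the maximizer
  have hxpos : ∀ i, 0 < x i := by
    by_contra hc
    push_neg at hc
    obtain ⟨w₁, hw₁⟩ := hc
    have hw₁0 : x w₁ = 0 := le_antisymm hw₁ (hxK.1 w₁)
    have hxnz : ∃ u, x u ≠ 0 := by
      by_contra hz
      push_neg at hz
      have : ∑ i, x i ^ k = 0 := by
        apply Finset.sum_eq_zero; intro i _; rw [hz i, zero_pow hk0]
      rw [hxK.2] at this; norm_num at this
    obtain ⟨u, hu⟩ := hxnz
    -- find a crossing edge
    have key : ∀ v, Relation.ReflTransGen (fun a b : Fin n => ∃ e ∈ E, a ∈ e ∧ b ∈ e) u v →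
        x v = 0 → ∃ e ∈ E, (∃ a ∈ e, x a ≠ 0) ∧ (∃ b ∈ e, x b = 0) := by
      intro v hv
      induction hv with
      | refl => exact fun h0 => absurd h0 hu
      | @tail b c hab hbc ih =>
        intro hc0
        obtain ⟨e, heE, hbe, hce⟩ := hbc
        by_cases hxb : x b = 0
        · exact ih hxb
        · exact ⟨e, heE, ⟨b, hbe, hxb⟩, ⟨c, hce, hc0⟩⟩
    have hcross : ∃ e ∈ E, (∃ a ∈ e, x a ≠ 0) ∧ (∃ b ∈ e, x b = 0) :=
      key w₁ (hconn u w₁) hw₁0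
    obtain ⟨e₀, he₀E, ⟨a, hae, hxa⟩, ⟨b, hbe, hxb⟩⟩ := hcross
    obtain ⟨z, hzdef⟩ : ∃ z, (univ.filter (fun i : Fin n => x i = 0)).card = z := ⟨_, rfl⟩
    have hz1 : 1 ≤ z := hzdef ▸ Finset.card_pos.2 ⟨w₁, by simp [hw₁0]⟩
    obtain ⟨C, hCdef⟩ : ∃ c, (∏ v ∈ e₀.filter (fun v => ¬ x v = 0), x v) = c := ⟨_, rfl⟩
    have hC : 0 < C := hCdef ▸ Finset.prod_pos (fun v hv => by
      have := (Finset.mem_filter.1 hv).2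
      exact lt_of_le_of_ne (hxK.1 v) (Ne.symm this))
    obtain ⟨w₀, hw₀def⟩ : ∃ w, (e₀.filter (fun v => x v = 0)).card = w := ⟨_, rfl⟩
    have hw₀1 : 1 ≤ w₀ := hw₀def ▸ Finset.card_pos.2 ⟨b, by simp [hbe, hxb]⟩
    have hw₀k : w₀ < k := by
      have hss : e₀.filter (fun v => x v = 0) ⊂ e₀ :=
        Finset.filter_ssubset.2 ⟨a, hae, by simpa using hxa⟩
      have := Finset.card_lt_card hss
      rw [hunif e₀ he₀E, hw₀def] at this
      exact this
    obtain ⟨lam, hlamdef⟩ : ∃ l, Ffun E x = l := ⟨_, rfl⟩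
    have hlam0 : 0 ≤ lam := hlamdef ▸
      Finset.sum_nonneg (fun e _ => Finset.prod_nonneg (fun v _ => hxK.1 v))
    obtain ⟨ε, hεdef⟩ : ∃ e, min 1 (C / (lam * z + 1)) = e := ⟨_, rfl⟩
    have hden : (0:ℝ) < lam * z + 1 := by positivity
    have hε0 : 0 < ε := hεdef ▸ lt_min one_pos (div_pos hC hden)
    have hε1 : ε ≤ 1 := hεdef ▸ min_le_left _ _
    have hεlt : lam * z * ε < C := by
      have h2 : lam * z * (C / (lam * z + 1)) < C := by
        rw [mul_div_assoc', div_lt_iff₀ hden]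
        nlinarith [hC, (by positivity : (0:ℝ) ≤ lam * (z:ℝ))]
      calc lam * z * ε ≤ lam * z * (C / (lam * z + 1)) := by
            rw [← hεdef]
            exact mul_le_mul_of_nonneg_left (min_le_right _ _) (by positivity)
        _ < C := h2
    have hyx : ∀ v, x v ≤ (if x v = 0 then ε else x v) := by
      intro v
      split
      · rename_i h; rw [h]; exact hε0.le
      · exact le_refl _
    have hy0 : ∀ v, 0 ≤ (if x v = 0 then ε else x v) :=
      fun v => le_trans (hxK.1 v) (hyx v)
    have hysum : ∑ v, (if x v = 0 then ε else x v) ^ k = 1 + z * ε ^ k := by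
      rw [← Finset.sum_filter_add_sum_filter_not univ (fun v => x v = 0)]
      have h1 : ∑ v ∈ univ.filter (fun v : Fin n => x v = 0),
          (if x v = 0 then ε else x v) ^ k = z * ε ^ k := by
        rw [Finset.sum_congr rfl
          (fun v hv => by rw [if_pos (Finset.mem_filter.1 hv).2]),
          Finset.sum_const, nsmul_eq_mul, hzdef]
      have h2 : ∑ v ∈ univ.filter (fun v : Fin n => ¬ x v = 0),
          (if x v = 0 then ε else x v) ^ k = 1 := by
        rw [Finset.sum_congr rfl
          (fun v hv => by rw [if_neg (Finset.mem_filter.1 hv).2])]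
        have htot := hxK.2
        rw [← Finset.sum_filter_add_sum_filter_not univ (fun v => x v = 0)] at htot
        have h3 : ∑ v ∈ univ.filter (fun v : Fin n => x v = 0), x v ^ k = 0 :=
          Finset.sum_eq_zero (fun v hv => by
            rw [(Finset.mem_filter.1 hv).2, zero_pow hk0])
        linarith
      rw [h1, h2]; ring
    have hprod_e₀ : ∏ v ∈ e₀, (if x v = 0 then ε else x v) = ε ^ w₀ * C := by
      rw [← Finset.prod_filter_mul_prod_filter_not e₀ (fun v => x v = 0)]
      have h1 : ∏ v ∈ e₀.filter (fun v => x v = 0), (if x v = 0 then ε else x v)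
          = ε ^ w₀ := by
        rw [Finset.prod_congr rfl
          (fun v hv => by rw [if_pos (Finset.mem_filter.1 hv).2]),
          Finset.prod_const, hw₀def]
      have h2 : ∏ v ∈ e₀.filter (fun v => ¬ x v = 0), (if x v = 0 then ε else x v)
          = C := by
        rw [Finset.prod_congr rfl
          (fun v hv => by rw [if_neg (Finset.mem_filter.1 hv).2]), hCdef]
      rw [h1, h2]
    have hFy : lam + C * ε ^ w₀ ≤ Ffun E (fun v => if x v = 0 then ε else x v) := by
      have hx0 : ∏ v ∈ e₀, x v = 0 := Finset.prod_eq_zero hbe hxb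
      have hexp : Ffun E (fun v => if x v = 0 then ε else x v)
          = ∏ v ∈ e₀, (if x v = 0 then ε else x v)
            + ∑ e ∈ E.erase e₀, ∏ v ∈ e, (if x v = 0 then ε else x v) :=
        (Finset.add_sum_erase E _ he₀E).symm
      have hexp' : Ffun E x = ∏ v ∈ e₀, x v + ∑ e ∈ E.erase e₀, ∏ v ∈ e, x v :=
        (Finset.add_sum_erase E _ he₀E).symm
      have hsum_le : ∑ e ∈ E.erase e₀, ∏ v ∈ e, x v
          ≤ ∑ e ∈ E.erase e₀, ∏ v ∈ e, (if x v = 0 then ε else x v) :=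
        Finset.sum_le_sum (fun e _ =>
          Finset.prod_le_prod (fun v _ => hxK.1 v) (fun v _ => hyx v))
      rw [hexp, hprod_e₀]
      rw [hlamdef, hx0, zero_add] at hexp'
      rw [hexp'] at *
      nlinarith [hsum_le]
    obtain ⟨T, hTdef⟩ : ∃ t, (1 + (z:ℝ) * ε ^ k) = t := ⟨_, rfl⟩
    have hT0 : (0:ℝ) < T := hTdef ▸ by positivity
    obtain ⟨s₀, hs₀def⟩ : ∃ s, T ^ (-(1:ℝ)/k) = s := ⟨_, rfl⟩
    have hs₀ : 0 < s₀ := hs₀def ▸ Real.rpow_pos_of_pos hT0 _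
    have hsk : s₀ ^ k = T⁻¹ := by
      rw [← hs₀def, ← Real.rpow_natCast (T ^ (-(1:ℝ)/k)) k, ← Real.rpow_mul hT0.le]
      rw [show (-(1:ℝ)/k) * k = -1 by field_simp, Real.rpow_neg_one]
    have hy'K : (fun v => s₀ * (if x v = 0 then ε else x v)) ∈ K := by
      constructor
      · exact fun i => mul_nonneg hs₀.le (hy0 i)
      · show (∑ v, (s₀ * (if x v = 0 then ε else x v)) ^ k) = 1
        rw [Finset.sum_congr rfl (fun v _ => mul_pow s₀ _ k), ← Finset.mul_sum,
          hysum, hTdef, hsk]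
        exact inv_mul_cancel₀ hT0.ne'
    have hFy' : Ffun E (fun v => s₀ * (if x v = 0 then ε else x v))
        = s₀ ^ k * Ffun E (fun v => if x v = 0 then ε else x v) := by
      rw [Ffun, Ffun, Finset.mul_sum]
      apply Finset.sum_congr rfl
      intro e heE
      rw [Finset.prod_mul_distrib, Finset.prod_const, hunif e heE]
    have hle : Ffun E (fun v => s₀ * (if x v = 0 then ε else x v)) ≤ lam :=
      hlamdef ▸ hmax hy'K
    have hle2 : Ffun E (fun v => if x v = 0 then ε else x v) ≤ T * lam := by
      rw [hFy', hsk] at hle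
      calc Ffun E (fun v => if x v = 0 then ε else x v)
          = T * (T⁻¹ * Ffun E (fun v => if x v = 0 then ε else x v)) := by
            field_simp
        _ ≤ T * lam := mul_le_mul_of_nonneg_left hle hT0.le
    have hfin : C * ε ^ w₀ ≤ lam * z * ε ^ k := by
      have h5 : lam + C * ε ^ w₀ ≤ T * lam := le_trans hFy hle2
      rw [← hTdef] at h5
      nlinarith [h5]
    have hεk : ε ^ k = ε ^ (k - w₀) * ε ^ w₀ := by
      rw [← pow_add]; congr 1; omega
    have hC_le : C ≤ lam * z * ε ^ (k - w₀) := by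
      rw [hεk, ← mul_assoc] at hfin
      exact le_of_mul_le_mul_right hfin (pow_pos hε0 w₀)
    have hεpow : ε ^ (k - w₀) ≤ ε :=
      pow_le_of_le_one hε0.le hε1 (by omega)
    have hfinal : C ≤ lam * z * ε := le_trans hC_le
      (mul_le_mul_of_nonneg_left hεpow (by positivity))
    linarith
  -- Lagrange multipliers
  have hgx : ∑ i, x i ^ k = 1 := hxK.2
  have hextr : IsLocalExtrOn (Ffun E)
      {y : Fin n → ℝ | (∑ i, y i ^ k) = ∑ i, x i ^ k} x := by
    have hopen : IsOpen {y : Fin n → ℝ | ∀ i, 0 < y i} := by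
      rw [Set.setOf_forall]
      exact isOpen_iInter_of_finite
        (fun i => isOpen_lt continuous_const (continuous_apply i))
    have hmem : {y : Fin n → ℝ | ∀ i, 0 < y i} ∈ nhds x := hopen.mem_nhds hxpos
    have hmf : IsMaxFilter (Ffun E)
        (nhdsWithin x {y : Fin n → ℝ | (∑ i, y i ^ k) = ∑ i, x i ^ k}) x := by
      filter_upwards [self_mem_nhdsWithin, nhdsWithin_le_nhds hmem] with y hy1 hy2
      exact hmax ⟨fun i => (hy2 i).le, by rw [hy1, hgx]⟩
    exact Or.inr hmf
  obtain ⟨Λ, Λ₀, hΛne, heq⟩ :=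
    hextr.exists_multipliers_of_hasStrictFDerivAt_1d (gfun_deriv x) (Ffun_deriv E x)
  have happ : ∀ i, Λ * ((k:ℝ) * x i ^ (k-1)) + Λ₀ * Sfun E i x = 0 := by
    intro i
    have h1 := congrArg (fun L : (Fin n → ℝ) →L[ℝ] ℝ => L (Pi.single i 1)) heq
    simp only [ContinuousLinearMap.add_apply, ContinuousLinearMap.coe_smul',
      Pi.smul_apply, ContinuousLinearMap.zero_apply, smul_eq_mul] at h1
    rw [Fderiv_apply E x i, gderiv_apply x i] at h1
    exact h1
  have hSnn : ∀ i, 0 ≤ Sfun E i x := fun i =>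
    Finset.sum_nonneg (fun e _ => Finset.prod_nonneg (fun v _ => (hxpos v).le))
  have hΛ₀ : Λ₀ ≠ 0 := by
    intro h0
    have h1 := happ i₀
    rw [h0, zero_mul, add_zero] at h1
    have hkpos : (0:ℝ) < (k:ℝ) * x i₀ ^ (k-1) :=
      mul_pos (by exact_mod_cast Nat.pos_of_ne_zero hk0) (pow_pos (hxpos i₀) _)
    have hΛ : Λ = 0 := by
      rcases mul_eq_zero.1 h1 with h | h
      · exact h
      · exact absurd h hkpos.ne'
    exact hΛne (by simp [hΛ, h0, Prod.ext_iff])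
  have heig : ∀ i, Sfun E i x = -(Λ * ↑k) / Λ₀ * x i ^ (k - 1) := by
    intro i
    have h := happ i
    field_simp
    nlinarith [h]
  refine ⟨-(Λ * ↑k)/Λ₀, x, ?_, hxpos, heig⟩
  by_contra hr
  push_neg at hr
  have h1 := heig i₀
  nlinarith [hSnn i₀, pow_pos (hxpos i₀) (k-1), h1, hr]
lemma Sfun_le_of_bound (E : Finset (Finset (Fin n))) (hunif : ∀ e ∈ E, e.card = k)
    (i : Fin n) (x : Fin n → ℝ) (M : ℝ) (hpos : ∀ v, 0 ≤ x v)
    (hb : ∀ e ∈ E.filter (fun e => i ∈ e), ∀ v ∈ e.erase i, x v ≤ M) :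
    Sfun E i x ≤ (deg E i) * M ^ (k-1) := by
  rw [Sfun, deg]
  calc ∑ e ∈ E.filter (fun e => i ∈ e), ∏ v ∈ e.erase i, x v
      ≤ ∑ _e ∈ E.filter (fun e => i ∈ e), M ^ (k-1) := by
        apply Finset.sum_le_sum
        intro e he
        have hcard : (e.erase i).card = k - 1 := by
          rw [Finset.card_erase_of_mem (Finset.mem_filter.1 he).2,
            hunif e (Finset.mem_filter.1 he).1]
        calc ∏ v ∈ e.erase i, x v ≤ ∏ _v ∈ e.erase i, M :=
              Finset.prod_le_prod (fun v _ => hpos v) (hb e he)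
          _ = M ^ (k-1) := by rw [Finset.prod_const, hcard]
    _ = (deg E i) * M ^ (k-1) := by rw [Finset.sum_const, nsmul_eq_mul]; rfl

lemma Sfun_ge_of_bound (E : Finset (Finset (Fin n))) (hunif : ∀ e ∈ E, e.card = k)
    (i : Fin n) (x : Fin n → ℝ) (M : ℝ) (hM : 0 ≤ M)
    (hb : ∀ e ∈ E.filter (fun e => i ∈ e), ∀ v ∈ e.erase i, M ≤ x v) :
    (deg E i) * M ^ (k-1) ≤ Sfun E i x := by
  rw [Sfun, deg]
  calc ((E.filter (fun e => i ∈ e)).card : ℝ) * M ^ (k-1)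
      = ∑ _e ∈ E.filter (fun e => i ∈ e), M ^ (k-1) := by
        rw [Finset.sum_const, nsmul_eq_mul]
    _ ≤ ∑ e ∈ E.filter (fun e => i ∈ e), ∏ v ∈ e.erase i, x v := by
        apply Finset.sum_le_sum
        intro e he
        have hcard : (e.erase i).card = k - 1 := by
          rw [Finset.card_erase_of_mem (Finset.mem_filter.1 he).2,
            hunif e (Finset.mem_filter.1 he).1]
        calc M ^ (k-1) = ∏ _v ∈ e.erase i, M := by rw [Finset.prod_const, hcard]
          _ ≤ ∏ v ∈ e.erase i, x v :=
              Finset.prod_le_prod (fun _ _ => hM) (hb e he)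

lemma Sfun_tight_up (E : Finset (Finset (Fin n))) (hunif : ∀ e ∈ E, e.card = k)
    (i : Fin n) (x : Fin n → ℝ) (M : ℝ) (hpos : ∀ v, 0 < x v)
    (hb : ∀ e ∈ E.filter (fun e => i ∈ e), ∀ v ∈ e.erase i, x v ≤ M)
    (heq : Sfun E i x = (deg E i) * M ^ (k-1)) :
    ∀ e ∈ E.filter (fun e => i ∈ e), ∀ v ∈ e.erase i, x v = M := by
  have hedge : ∀ e ∈ E.filter (fun e => i ∈ e), ∏ v ∈ e.erase i, x v = M ^ (k-1) := by
    apply sum_tight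
    · intro e he
      have hcard : (e.erase i).card = k - 1 := by
        rw [Finset.card_erase_of_mem (Finset.mem_filter.1 he).2,
          hunif e (Finset.mem_filter.1 he).1]
      calc ∏ v ∈ e.erase i, x v ≤ ∏ _v ∈ e.erase i, M :=
            Finset.prod_le_prod (fun v _ => (hpos v).le) (hb e he)
        _ = M ^ (k-1) := by rw [Finset.prod_const, hcard]
    · rw [← Sfun, heq, deg]
  intro e he
  have hcard : (e.erase i).card = k - 1 := by
    rw [Finset.card_erase_of_mem (Finset.mem_filter.1 he).2,
      hunif e (Finset.mem_filter.1 he).1]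
  exact prod_tight (fun v _ => hpos v) (hb e he) (by rw [hedge e he, hcard])

lemma Sfun_tight_down (E : Finset (Finset (Fin n))) (hunif : ∀ e ∈ E, e.card = k)
    (i : Fin n) (x : Fin n → ℝ) (M : ℝ) (hM : 0 < M)
    (hb : ∀ e ∈ E.filter (fun e => i ∈ e), ∀ v ∈ e.erase i, M ≤ x v)
    (heq : Sfun E i x = (deg E i) * M ^ (k-1)) :
    ∀ e ∈ E.filter (fun e => i ∈ e), ∀ v ∈ e.erase i, x v = M := by
  have hedge : ∀ e ∈ E.filter (fun e => i ∈ e), ∏ v ∈ e.erase i, x v = M ^ (k-1) := by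
    apply sum_tight'
    · intro e he
      have hcard : (e.erase i).card = k - 1 := by
        rw [Finset.card_erase_of_mem (Finset.mem_filter.1 he).2,
          hunif e (Finset.mem_filter.1 he).1]
      calc M ^ (k-1) = ∏ _v ∈ e.erase i, M := by rw [Finset.prod_const, hcard]
        _ ≤ ∏ v ∈ e.erase i, x v := Finset.prod_le_prod (fun _ _ => hM.le) (hb e he)
    · rw [← Sfun, heq, deg]
  intro e he
  have hcard : (e.erase i).card = k - 1 := by
    rw [Finset.card_erase_of_mem (Finset.mem_filter.1 he).2,
      hunif e (Finset.mem_filter.1 he).1]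
  exact prod_tight' hM (hb e he) (by rw [hedge e he, hcard])

lemma tApply_adjT (E : Finset (Finset (Fin n))) (hunif : ∀ e ∈ E, e.card = k)
    (y : Fin n → ℂ) (i : Fin n) :
    tApply (adjT E k) y i = ∑ e ∈ E.filter (fun e => i ∈ e), ∏ v ∈ e.erase i, y v := by
  classical
  rw [tApply]
  have h : ∀ t : Fin (k-1) → Fin n, ((adjT E k i t : ℝ) : ℂ) * ∏ j, y (t j)
      = (if insert i (Finset.image t univ) ∈ E
          then ((k-1).factorial : ℂ)⁻¹ else 0) * ∏ j, y (t j) := by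
    intro t
    rw [adjT]
    split <;> simp
  rw [Finset.sum_congr rfl (fun t _ => h t)]
  exact apply_formula E k hunif i y

lemma specRad_eq (hn : 0 < n) (E : Finset (Finset (Fin n)))
    (hunif : ∀ e ∈ E, e.card = k)
    {r : ℝ} {x : Fin n → ℝ} (hr : 0 ≤ r) (hx : ∀ i, 0 < x i)
    (heig : ∀ i, Sfun E i x = r * x i ^ (k-1)) :
    specRad (adjT E k) = r := by
  classical
  have i₀ : Fin n := ⟨0, hn⟩
  have hmem : r ∈ {ρ : ℝ | ∃ lam : ℂ, IsEigenvalue (adjT E k) lam ∧ ρ = ‖lam‖} := by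
    refine ⟨(r:ℂ), ⟨fun v => (x v : ℂ), ?_, ?_⟩, ?_⟩
    · intro h0
      have := congrFun h0 i₀
      simp only [Pi.zero_apply, Complex.ofReal_eq_zero] at this
      exact (hx i₀).ne' this
    · intro i
      rw [tApply_adjT E hunif]
      have : ∑ e ∈ E.filter (fun e => i ∈ e), ∏ v ∈ e.erase i, ((x v : ℝ) : ℂ)
          = ((Sfun E i x : ℝ) : ℂ) := by
        rw [Sfun]
        push_cast
        rfl
      rw [this, heig i]
      push_cast
      ring
    · rw [Complex.norm_of_nonneg hr]
  have hub : ∀ s ∈ {ρ : ℝ | ∃ lam : ℂ, IsEigenvalue (adjT E k) lam ∧ ρ = ‖lam‖},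
      s ≤ r := by
    rintro s ⟨μ, ⟨y, hy0, hyeig⟩, rfl⟩
    obtain ⟨j, -, hj⟩ := Finset.exists_max_image univ (fun v => ‖y v‖ / x v)
      ⟨i₀, mem_univ _⟩
    obtain ⟨t, htdef⟩ : ∃ t, ‖y j‖ / x j = t := ⟨_, rfl⟩
    have hyt : ∀ v, ‖y v‖ ≤ t * x v := by
      intro v
      have h1 := htdef ▸ hj v (mem_univ v)
      rw [div_le_iff₀ (hx v)] at h1
      exact h1
    have ht0 : 0 < t := by
      have hex : ∃ v, y v ≠ 0 := by
        by_contra hz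
        push_neg at hz
        exact hy0 (funext fun v => hz v)
      obtain ⟨v, hv⟩ := hex
      have h1 : 0 < ‖y v‖ / x v :=
        div_pos (by simpa using hv) (hx v)
      exact lt_of_lt_of_le h1 (htdef ▸ hj v (mem_univ v))
    have habsj : ‖y j‖ = t * x j := by
      rw [← htdef]
      exact (div_mul_cancel₀ _ (hx j).ne').symm
    have hkey : ‖μ‖ * ‖y j‖ ^ (k-1)
        ≤ t ^ (k-1) * (r * x j ^ (k-1)) := by
      have h1 : ‖μ * (y j) ^ (k-1)‖ = ‖μ‖ * ‖y j‖ ^ (k-1) := by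
        rw [norm_mul, norm_pow]
      rw [← h1, ← hyeig j, tApply_adjT E hunif]
      calc ‖∑ e ∈ E.filter (fun e => j ∈ e), ∏ v ∈ e.erase j, y v‖
          ≤ ∑ e ∈ E.filter (fun e => j ∈ e), ‖∏ v ∈ e.erase j, y v‖ :=
            norm_sum_le _ _
        _ = ∑ e ∈ E.filter (fun e => j ∈ e), ∏ v ∈ e.erase j, ‖y v‖ := by
            apply Finset.sum_congr rfl
            intro e _
            exact norm_prod _ _
        _ ≤ ∑ e ∈ E.filter (fun e => j ∈ e),
              ∏ v ∈ e.erase j, (t * x v) := by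
            apply Finset.sum_le_sum
            intro e _
            exact Finset.prod_le_prod (fun v _ => norm_nonneg _)
              (fun v _ => hyt v)
        _ = t ^ (k-1) * Sfun E j x := by
            rw [Sfun, Finset.mul_sum]
            apply Finset.sum_congr rfl
            intro e he
            rw [Finset.prod_mul_distrib, Finset.prod_const,
              Finset.card_erase_of_mem (Finset.mem_filter.1 he).2,
              hunif e (Finset.mem_filter.1 he).1]
        _ = t ^ (k-1) * (r * x j ^ (k-1)) := by rw [heig j]
    rw [habsj, mul_pow] at hkey
    nlinarith [hkey, pow_pos ht0 (k-1), pow_pos (hx j) (k-1),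
      mul_pos (pow_pos ht0 (k-1)) (pow_pos (hx j) (k-1))]
  rw [specRad]
  exact le_antisymm (csSup_le ⟨r, hmem⟩ hub) (le_csSup ⟨r, fun s hs => hub s hs⟩ hmem)

lemma prod_eq_forces {a A b B : ℝ} (ha : a ≤ A) (hb : b ≤ B) (hA : 0 < A)
    (hbpos : 0 < b) (hABab : A * B = a * b) : a = A ∧ b = B := by
  constructor
  · by_contra hne
    have hlt : a < A := lt_of_le_of_ne ha hne
    have h3 : a * b < A * b := mul_lt_mul_of_pos_right hlt hbpos
    have h4 : A * b ≤ A * B := mul_le_mul_of_nonneg_left hb hA.le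
    linarith
  · by_contra hne
    have hlt : b < B := lt_of_le_of_ne hb hne
    have h3 : a * b ≤ A * b := mul_le_mul_of_nonneg_right ha hbpos.le
    have h4 : A * b < A * B := mul_lt_mul_of_pos_left hlt hA
    linarith


end HypAux

open HypAux in
set_option maxHeartbeats 4000000 in
theorem stmt14 {n k : ℕ} (hn : 0 < n) (hk : 3 ≤ k)
    (E : Finset (Finset (Fin n))) (hunif : ∀ e ∈ E, e.card = k)
    (hconn : HConnected E)
    (P : Set ℝ)
    (hP : P = {r : ℝ | ∃ e ∈ E, ∃ i ∈ e, ∃ j ∈ e, i ≠ j ∧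
      r = Real.sqrt ((deg E i : ℝ) * (deg E j : ℝ))}) :
    sInf P ≤ specRad (adjT E k) ∧ specRad (adjT E k) ≤ sSup P ∧
      ((specRad (adjT E k) = sInf P ∨ specRad (adjT E k) = sSup P) ↔
        ∃ d : ℕ, ∀ i : Fin n, deg E i = d) := by
  classical
  obtain ⟨r, x, hr0, hxpos, heig⟩ := HypAux.exists_pf hn hk E hunif hconn
  have hspec : specRad (adjT E k) = r := HypAux.specRad_eq hn E hunif hr0 hxpos heig
  by_cases hE : E = ∅
  · -- degenerate case: no edges
    have hr0' : r = 0 := by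
      have h := heig ⟨0, hn⟩
      rw [HypAux.Sfun, hE] at h
      simp only [Finset.filter_empty, Finset.sum_empty] at h
      have hp : (0:ℝ) < x ⟨0, hn⟩ ^ (k-1) := pow_pos (hxpos _) _
      rcases mul_eq_zero.1 h.symm with h' | h'
      · exact h'
      · exact absurd h' hp.ne'
    have hPe : P = ∅ := by
      rw [hP]
      ext ρ
      simp [hE]
    rw [hspec, hr0', hPe, Real.sInf_empty, Real.sSup_empty]
    refine ⟨le_refl 0, le_refl 0, ?_⟩
    constructor
    · intro _
      exact ⟨0, fun i => by simp [deg, hE]⟩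
    · intro _
      exact Or.inl rfl
  · have hEne : E.Nonempty := Finset.nonempty_iff_ne_empty.2 hE
    have hex : ∀ v : Fin n, ∃ e ∈ E, v ∈ e := by
      obtain ⟨e₀, he₀⟩ := hEne
      have he₀ne : e₀.Nonempty := Finset.card_pos.1 (by rw [hunif e₀ he₀]; omega)
      obtain ⟨u₀, hu₀⟩ := he₀ne
      intro v
      rcases Relation.ReflTransGen.cases_head (hconn v u₀) with h | ⟨c, ⟨e, heE, hve, -⟩, -⟩
      · exact ⟨e₀, he₀, h ▸ hu₀⟩
      · exact ⟨e, heE, hve⟩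
    have hdeg : ∀ v, 0 < deg E v := by
      intro v
      obtain ⟨e, heE, hv⟩ := hex v
      exact Finset.card_pos.2 ⟨e, Finset.mem_filter.2 ⟨heE, hv⟩⟩
    have hdeg1 : ∀ v, (1:ℝ) ≤ (deg E v : ℝ) := fun v => by exact_mod_cast hdeg v
    have hdegc : ∀ v, ((E.filter (fun e => v ∈ e)).card : ℝ) = (deg E v : ℝ) := fun v => rfl
    have hNne : ∀ i : Fin n,
        ((E.filter (fun e => i ∈ e)).biUnion (fun e => e.erase i)).Nonempty := by
      intro i
      obtain ⟨e, heE, hie⟩ := hex i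
      have hh : (e.erase i).Nonempty := by
        rw [← Finset.card_pos, Finset.card_erase_of_mem hie, hunif e heE]; omega
      obtain ⟨v, hv⟩ := hh
      exact ⟨v, Finset.mem_biUnion.2 ⟨e, Finset.mem_filter.2 ⟨heE, hie⟩, hv⟩⟩
    have hNsub : ∀ i : Fin n, ∀ e ∈ E.filter (fun e => i ∈ e), ∀ v ∈ e.erase i,
        v ∈ (E.filter (fun e => i ∈ e)).biUnion (fun e => e.erase i) :=
      fun i e he v hv => Finset.mem_biUnion.2 ⟨e, he, hv⟩
    have hPmem : ∀ (u v : Fin n) (e : Finset (Fin n)), e ∈ E → u ∈ e → v ∈ e → u ≠ v →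
        Real.sqrt ((deg E u : ℝ) * (deg E v : ℝ)) ∈ P := by
      intro u v e heE hu hv hne
      rw [hP]
      exact ⟨e, heE, u, hu, v, hv, hne, rfl⟩
    have hPnn : ∀ ρ ∈ P, 0 ≤ ρ := by
      intro ρ hρ
      rw [hP] at hρ
      obtain ⟨e, _, u, _, v, _, _, rfl⟩ := hρ
      exact Real.sqrt_nonneg _
    have hPub : ∀ ρ ∈ P, ρ ≤ (E.card : ℝ) := by
      intro ρ hρ
      rw [hP] at hρ
      obtain ⟨e, _, u, _, v, _, _, rfl⟩ := hρ
      have h1 : (deg E u : ℝ) ≤ E.card := by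
        exact_mod_cast Finset.card_filter_le E (fun e => u ∈ e)
      have h2 : (deg E v : ℝ) ≤ E.card := by
        exact_mod_cast Finset.card_filter_le E (fun e => v ∈ e)
      calc Real.sqrt ((deg E u : ℝ) * (deg E v : ℝ))
          ≤ Real.sqrt ((E.card : ℝ) * (E.card : ℝ)) :=
            Real.sqrt_le_sqrt (by nlinarith [hdeg1 u, hdeg1 v])
        _ = (E.card : ℝ) := Real.sqrt_mul_self (Nat.cast_nonneg _)
    have hPbddA : BddAbove P := ⟨E.card, fun ρ hρ => hPub ρ hρ⟩
    have hPbddB : BddBelow P := ⟨0, fun ρ hρ => hPnn ρ hρ⟩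
    have hPne : P.Nonempty := by
      obtain ⟨e, heE⟩ := hEne
      have h2 : 1 < e.card := by rw [hunif e heE]; omega
      obtain ⟨u, hu, v, hv, huv⟩ := Finset.one_lt_card.1 h2
      exact ⟨_, hPmem u v e heE hu hv huv⟩
    -- the maximal pair
    obtain ⟨i₁, -, hi₁⟩ := Finset.exists_max_image Finset.univ x ⟨⟨0,hn⟩, Finset.mem_univ _⟩
    obtain ⟨j₁, hj₁N, hj₁⟩ := Finset.exists_max_image
      ((E.filter (fun e => i₁ ∈ e)).biUnion (fun e => e.erase i₁)) x (hNne i₁)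
    obtain ⟨e₁, he₁f, hj₁e⟩ := Finset.mem_biUnion.1 hj₁N
    have he₁E : e₁ ∈ E := (Finset.mem_filter.1 he₁f).1
    have hi₁e : i₁ ∈ e₁ := (Finset.mem_filter.1 he₁f).2
    have hj₁ne : j₁ ≠ i₁ := (Finset.mem_erase.1 hj₁e).1
    have hj₁e1 : j₁ ∈ e₁ := (Finset.mem_erase.1 hj₁e).2
    have hs1 : r * x i₁ ^ (k-1) ≤ (deg E i₁ : ℝ) * x j₁ ^ (k-1) := by
      rw [← heig i₁]
      exact HypAux.Sfun_le_of_bound E hunif i₁ x (x j₁) (fun v => (hxpos v).le)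
        (fun e he v hv => hj₁ v (hNsub i₁ e he v hv))
    have hs2 : r * x j₁ ^ (k-1) ≤ (deg E j₁ : ℝ) * x i₁ ^ (k-1) := by
      rw [← heig j₁]
      exact HypAux.Sfun_le_of_bound E hunif j₁ x (x i₁) (fun v => (hxpos v).le)
        (fun e _ v _ => hi₁ v (Finset.mem_univ v))
    have hp1 : (0:ℝ) < x i₁ ^ (k-1) := pow_pos (hxpos i₁) _
    have hp2 : (0:ℝ) < x j₁ ^ (k-1) := pow_pos (hxpos j₁) _
    have hr2 : r^2 ≤ (deg E i₁ : ℝ) * (deg E j₁ : ℝ) := by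
      nlinarith [hs1, hs2, hp1, hp2, hr0, hdeg1 i₁, hdeg1 j₁,
        mul_le_mul hs1 hs2 (by positivity) (by positivity)]
    have hin1 : Real.sqrt ((deg E i₁ : ℝ) * (deg E j₁ : ℝ)) ∈ P :=
      hPmem i₁ j₁ e₁ he₁E hi₁e hj₁e1 (Ne.symm hj₁ne)
    have hpart2 : r ≤ sSup P := by
      have h1 : r ≤ Real.sqrt ((deg E i₁ : ℝ) * (deg E j₁ : ℝ)) := by
        rw [← Real.sqrt_sq hr0]
        exact Real.sqrt_le_sqrt hr2
      exact le_trans h1 (le_csSup hPbddA hin1)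
    -- the minimal pair
    obtain ⟨i₂, -, hi₂⟩ := Finset.exists_min_image Finset.univ x ⟨⟨0,hn⟩, Finset.mem_univ _⟩
    obtain ⟨j₂, hj₂N, hj₂⟩ := Finset.exists_min_image
      ((E.filter (fun e => i₂ ∈ e)).biUnion (fun e => e.erase i₂)) x (hNne i₂)
    obtain ⟨e₂, he₂f, hj₂e⟩ := Finset.mem_biUnion.1 hj₂N
    have he₂E : e₂ ∈ E := (Finset.mem_filter.1 he₂f).1
    have hi₂e : i₂ ∈ e₂ := (Finset.mem_filter.1 he₂f).2
    have hj₂ne : j₂ ≠ i₂ := (Finset.mem_erase.1 hj₂e).1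
    have hj₂e1 : j₂ ∈ e₂ := (Finset.mem_erase.1 hj₂e).2
    have hs1' : (deg E i₂ : ℝ) * x j₂ ^ (k-1) ≤ r * x i₂ ^ (k-1) := by
      rw [← heig i₂]
      exact HypAux.Sfun_ge_of_bound E hunif i₂ x (x j₂) (hxpos j₂).le
        (fun e he v hv => hj₂ v (hNsub i₂ e he v hv))
    have hs2' : (deg E j₂ : ℝ) * x i₂ ^ (k-1) ≤ r * x j₂ ^ (k-1) := by
      rw [← heig j₂]
      exact HypAux.Sfun_ge_of_bound E hunif j₂ x (x i₂) (hxpos i₂).le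
        (fun e _ v _ => hi₂ v (Finset.mem_univ v))
    have hp1' : (0:ℝ) < x i₂ ^ (k-1) := pow_pos (hxpos i₂) _
    have hp2' : (0:ℝ) < x j₂ ^ (k-1) := pow_pos (hxpos j₂) _
    have hr2' : (deg E i₂ : ℝ) * (deg E j₂ : ℝ) ≤ r^2 := by
      nlinarith [hs1', hs2', hp1', hp2', hr0, hdeg1 i₂, hdeg1 j₂,
        mul_le_mul hs1' hs2' (by positivity) (by positivity)]
    have hin2 : Real.sqrt ((deg E i₂ : ℝ) * (deg E j₂ : ℝ)) ∈ P :=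
      hPmem i₂ j₂ e₂ he₂E hi₂e hj₂e1 (Ne.symm hj₂ne)
    have hpart1 : sInf P ≤ r := by
      have h1 : Real.sqrt ((deg E i₂ : ℝ) * (deg E j₂ : ℝ)) ≤ r := by
        rw [← Real.sqrt_sq hr0]
        exact Real.sqrt_le_sqrt hr2'
      exact le_trans (csInf_le hPbddB hin2) h1
    have hrpos : 0 < r := by
      nlinarith [hr2', hdeg1 i₂, hdeg1 j₂, hr0]
    refine ⟨by rw [hspec]; exact hpart1, by rw [hspec]; exact hpart2, ?_⟩
    rw [hspec]
    constructor
    · -- equality forces regularity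
      intro hcase
      rcases hcase with hcs | hcs
      · -- r = sInf P
        have h1 : r ≤ Real.sqrt ((deg E i₂ : ℝ) * (deg E j₂ : ℝ)) :=
          hcs ▸ csInf_le hPbddB hin2
        have hddnn : (0:ℝ) ≤ (deg E i₂ : ℝ) * (deg E j₂ : ℝ) := by positivity
        have h2 : r^2 ≤ (deg E i₂ : ℝ) * (deg E j₂ : ℝ) := by
          have := pow_le_pow_left₀ hr0 h1 2
          rwa [Real.sq_sqrt hddnn] at this
        have heq2 : r^2 = (deg E i₂ : ℝ) * (deg E j₂ : ℝ) := le_antisymm h2 hr2'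
        have hprodeq : (r * x i₂ ^ (k-1)) * (r * x j₂ ^ (k-1))
            = ((deg E i₂ : ℝ) * x j₂ ^ (k-1)) * ((deg E j₂ : ℝ) * x i₂ ^ (k-1)) := by
          have : r^2 * (x i₂ ^ (k-1) * x j₂ ^ (k-1))
              = ((deg E i₂ : ℝ) * (deg E j₂ : ℝ)) * (x i₂ ^ (k-1) * x j₂ ^ (k-1)) := by
            rw [heq2]
          nlinarith [this]
        obtain ⟨hta, htb⟩ := HypAux.prod_eq_forces hs1' hs2'
          (by positivity) (by nlinarith [hdeg1 j₂, hp1']) hprodeq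
        -- tightness gives constancy around i₂ and j₂
        have hvert1 : ∀ e ∈ E.filter (fun e => i₂ ∈ e), ∀ v ∈ e.erase i₂, x v = x j₂ := by
          apply HypAux.Sfun_tight_down E hunif i₂ x (x j₂) (hxpos j₂)
            (fun e he v hv => hj₂ v (hNsub i₂ e he v hv))
          rw [heig i₂, ← hta]
        have hvert2 : ∀ e ∈ E.filter (fun e => j₂ ∈ e), ∀ v ∈ e.erase j₂, x v = x i₂ := by
          apply HypAux.Sfun_tight_down E hunif j₂ x (x i₂) (hxpos i₂)
            (fun e _ v _ => hi₂ v (Finset.mem_univ v))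
          rw [heig j₂, ← htb]
        have hthird : ((e₂.erase i₂).erase j₂).Nonempty := by
          rw [← Finset.card_pos, Finset.card_erase_of_mem
              (Finset.mem_erase.2 ⟨hj₂ne, hj₂e1⟩),
            Finset.card_erase_of_mem hi₂e, hunif e₂ he₂E]
          omega
        obtain ⟨w, hw⟩ := hthird
        have hw1 : w ∈ e₂.erase i₂ := (Finset.mem_erase.1 hw).2
        have hwj : w ≠ j₂ := (Finset.mem_erase.1 hw).1
        have hwe : w ∈ e₂ := (Finset.mem_erase.1 hw1).2
        have hxw1 : x w = x j₂ := hvert1 e₂ he₂f w hw1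
        have hxw2 : x w = x i₂ := hvert2 e₂ (Finset.mem_filter.2 ⟨he₂E, hj₂e1⟩) w
          (Finset.mem_erase.2 ⟨hwj, hwe⟩)
        have hxji : x j₂ = x i₂ := by rw [← hxw1, hxw2]
        have hsuba : ∀ v, x v = x i₂ → (deg E v : ℝ) ≤ r := by
          intro v hv
          have hg : (deg E v : ℝ) * x i₂ ^ (k-1) ≤ Sfun E v x :=
            HypAux.Sfun_ge_of_bound E hunif v x (x i₂) (hxpos i₂).le
              (fun e _ u _ => hi₂ u (Finset.mem_univ u))
          rw [heig v, hv] at hg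
          exact le_of_mul_le_mul_right hg (pow_pos (hxpos i₂) _)
        have hsubb : ∀ u v, x u = x i₂ → x v = x i₂ → u ≠ v →
            (∃ e ∈ E, u ∈ e ∧ v ∈ e) → (deg E u : ℝ) = r := by
          rintro u v hu hv hne ⟨e, heE, hue, hve⟩
          have hm1 : r ≤ Real.sqrt ((deg E u : ℝ) * (deg E v : ℝ)) :=
            hcs ▸ csInf_le hPbddB (hPmem u v e heE hue hve hne)
          have hnn : (0:ℝ) ≤ (deg E u : ℝ) * (deg E v : ℝ) := by positivity
          have hm2 : r^2 ≤ (deg E u : ℝ) * (deg E v : ℝ) := by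
            have := pow_le_pow_left₀ hr0 hm1 2
            rwa [Real.sq_sqrt hnn] at this
          have hm3 : (deg E u : ℝ) ≤ r := hsuba u hu
          have hm4 : (deg E v : ℝ) ≤ r := hsuba v hv
          nlinarith [hm2, hm3, hm4, hrpos, hdeg1 u, hdeg1 v]
        have hsubc : ∀ u, x u = x i₂ → (deg E u : ℝ) = r →
            ∀ e ∈ E.filter (fun e => u ∈ e), ∀ v ∈ e.erase u, x v = x i₂ := by
          intro u hu hdu
          apply HypAux.Sfun_tight_down E hunif u x (x i₂) (hxpos i₂)
            (fun e _ v _ => hi₂ v (Finset.mem_univ v))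
          rw [heig u, hu, hdu]
        have hgood : ∀ v, x v = x i₂ ∧
            ∃ u, u ≠ v ∧ x u = x i₂ ∧ ∃ e ∈ E, v ∈ e ∧ u ∈ e := by
          intro v
          have hwalk := hconn i₂ v
          induction hwalk with
          | refl => exact ⟨rfl, j₂, hj₂ne, hxji, e₂, he₂E, hi₂e, hj₂e1⟩
          | @tail b c hab hbc ihh =>
            obtain ⟨e, heE, hbe, hce⟩ := hbc
            obtain ⟨hxb, u', hu'ne, hxu', e', he'E, hbe', hu'e'⟩ := ihh
            have hdb : (deg E b : ℝ) = r :=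
              hsubb b u' hxb hxu' (Ne.symm hu'ne) ⟨e', he'E, hbe', hu'e'⟩
            by_cases hcb : c = b
            · subst hcb
              exact ⟨hxb, u', hu'ne, hxu', e', he'E, hbe', hu'e'⟩
            · have hxc : x c = x i₂ := hsubc b hxb hdb e
                (Finset.mem_filter.2 ⟨heE, hbe⟩) c (Finset.mem_erase.2 ⟨hcb, hce⟩)
              exact ⟨hxc, b, fun h => hcb h.symm, hxb, e, heE, hce, hbe⟩
        refine ⟨deg E i₂, fun i => ?_⟩
        obtain ⟨hxv, u, hune, hxu, e, heE, hve, hue⟩ := hgood i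
        have hd1 : (deg E i : ℝ) = r := hsubb i u hxv hxu (Ne.symm hune) ⟨e, heE, hve, hue⟩
        obtain ⟨hxv2, u2, hune2, hxu2, e2, heE2, hve2, hue2⟩ := hgood i₂
        have hd2 : (deg E i₂ : ℝ) = r :=
          hsubb i₂ u2 hxv2 hxu2 (Ne.symm hune2) ⟨e2, heE2, hve2, hue2⟩
        exact_mod_cast hd1.trans hd2.symm
      · -- r = sSup P
        have h1 : Real.sqrt ((deg E i₁ : ℝ) * (deg E j₁ : ℝ)) ≤ r :=
          hcs ▸ le_csSup hPbddA hin1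
        have hddnn : (0:ℝ) ≤ (deg E i₁ : ℝ) * (deg E j₁ : ℝ) := by positivity
        have h2 : (deg E i₁ : ℝ) * (deg E j₁ : ℝ) ≤ r^2 := by
          have := pow_le_pow_left₀ (Real.sqrt_nonneg _) h1 2
          rwa [Real.sq_sqrt hddnn] at this
        have heq2 : r^2 = (deg E i₁ : ℝ) * (deg E j₁ : ℝ) := le_antisymm hr2 h2
        have hprodeq : ((deg E i₁ : ℝ) * x j₁ ^ (k-1)) * ((deg E j₁ : ℝ) * x i₁ ^ (k-1))
            = (r * x i₁ ^ (k-1)) * (r * x j₁ ^ (k-1)) := by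
          have : r^2 * (x i₁ ^ (k-1) * x j₁ ^ (k-1))
              = ((deg E i₁ : ℝ) * (deg E j₁ : ℝ)) * (x i₁ ^ (k-1) * x j₁ ^ (k-1)) := by
            rw [heq2]
          nlinarith [this]
        obtain ⟨hta, htb⟩ := HypAux.prod_eq_forces hs1 hs2
          (by nlinarith [hdeg1 i₁, hp2']) (by positivity) hprodeq
        have hvert1 : ∀ e ∈ E.filter (fun e => i₁ ∈ e), ∀ v ∈ e.erase i₁, x v = x j₁ := by
          apply HypAux.Sfun_tight_up E hunif i₁ x (x j₁) hxpos
            (fun e he v hv => hj₁ v (hNsub i₁ e he v hv))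
          rw [heig i₁, hta]
        have hvert2 : ∀ e ∈ E.filter (fun e => j₁ ∈ e), ∀ v ∈ e.erase j₁, x v = x i₁ := by
          apply HypAux.Sfun_tight_up E hunif j₁ x (x i₁) hxpos
            (fun e _ v _ => hi₁ v (Finset.mem_univ v))
          rw [heig j₁, htb]
        have hthird : ((e₁.erase i₁).erase j₁).Nonempty := by
          rw [← Finset.card_pos, Finset.card_erase_of_mem
              (Finset.mem_erase.2 ⟨hj₁ne, hj₁e1⟩),
            Finset.card_erase_of_mem hi₁e, hunif e₁ he₁E]
          omega
        obtain ⟨w, hw⟩ := hthird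
        have hw1 : w ∈ e₁.erase i₁ := (Finset.mem_erase.1 hw).2
        have hwj : w ≠ j₁ := (Finset.mem_erase.1 hw).1
        have hwe : w ∈ e₁ := (Finset.mem_erase.1 hw1).2
        have hxw1 : x w = x j₁ := hvert1 e₁ he₁f w hw1
        have hxw2 : x w = x i₁ := hvert2 e₁ (Finset.mem_filter.2 ⟨he₁E, hj₁e1⟩) w
          (Finset.mem_erase.2 ⟨hwj, hwe⟩)
        have hxji : x j₁ = x i₁ := by rw [← hxw1, hxw2]
        have hsuba : ∀ v, x v = x i₁ → r ≤ (deg E v : ℝ) := by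
          intro v hv
          have hg : Sfun E v x ≤ (deg E v : ℝ) * x i₁ ^ (k-1) :=
            HypAux.Sfun_le_of_bound E hunif v x (x i₁) (fun u => (hxpos u).le)
              (fun e _ u _ => hi₁ u (Finset.mem_univ u))
          rw [heig v, hv] at hg
          exact le_of_mul_le_mul_right hg (pow_pos (hxpos i₁) _)
        have hsubb : ∀ u v, x u = x i₁ → x v = x i₁ → u ≠ v →
            (∃ e ∈ E, u ∈ e ∧ v ∈ e) → (deg E u : ℝ) = r := by
          rintro u v hu hv hne ⟨e, heE, hue, hve⟩
          have hm1 : Real.sqrt ((deg E u : ℝ) * (deg E v : ℝ)) ≤ r :=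
            hcs ▸ le_csSup hPbddA (hPmem u v e heE hue hve hne)
          have hnn : (0:ℝ) ≤ (deg E u : ℝ) * (deg E v : ℝ) := by positivity
          have hm2 : (deg E u : ℝ) * (deg E v : ℝ) ≤ r^2 := by
            have := pow_le_pow_left₀ (Real.sqrt_nonneg _) hm1 2
            rwa [Real.sq_sqrt hnn] at this
          have hm3 : r ≤ (deg E u : ℝ) := hsuba u hu
          have hm4 : r ≤ (deg E v : ℝ) := hsuba v hv
          nlinarith [hm2, hm3, hm4, hrpos, hdeg1 u, hdeg1 v]
        have hsubc : ∀ u, x u = x i₁ → (deg E u : ℝ) = r →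
            ∀ e ∈ E.filter (fun e => u ∈ e), ∀ v ∈ e.erase u, x v = x i₁ := by
          intro u hu hdu
          apply HypAux.Sfun_tight_up E hunif u x (x i₁) hxpos
            (fun e _ v _ => hi₁ v (Finset.mem_univ v))
          rw [heig u, hu, hdu]
        have hgood : ∀ v, x v = x i₁ ∧
            ∃ u, u ≠ v ∧ x u = x i₁ ∧ ∃ e ∈ E, v ∈ e ∧ u ∈ e := by
          intro v
          have hwalk := hconn i₁ v
          induction hwalk with
          | refl => exact ⟨rfl, j₁, hj₁ne, hxji, e₁, he₁E, hi₁e, hj₁e1⟩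
          | @tail b c hab hbc ihh =>
            obtain ⟨e, heE, hbe, hce⟩ := hbc
            obtain ⟨hxb, u', hu'ne, hxu', e', he'E, hbe', hu'e'⟩ := ihh
            have hdb : (deg E b : ℝ) = r :=
              hsubb b u' hxb hxu' (Ne.symm hu'ne) ⟨e', he'E, hbe', hu'e'⟩
            by_cases hcb : c = b
            · subst hcb
              exact ⟨hxb, u', hu'ne, hxu', e', he'E, hbe', hu'e'⟩
            · have hxc : x c = x i₁ := hsubc b hxb hdb e
                (Finset.mem_filter.2 ⟨heE, hbe⟩) c (Finset.mem_erase.2 ⟨hcb, hce⟩)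
              exact ⟨hxc, b, fun h => hcb h.symm, hxb, e, heE, hce, hbe⟩
        refine ⟨deg E i₁, fun i => ?_⟩
        obtain ⟨hxv, u, hune, hxu, e, heE, hve, hue⟩ := hgood i
        have hd1 : (deg E i : ℝ) = r := hsubb i u hxv hxu (Ne.symm hune) ⟨e, heE, hve, hue⟩
        obtain ⟨hxv2, u2, hune2, hxu2, e2, heE2, hve2, hue2⟩ := hgood i₁
        have hd2 : (deg E i₁ : ℝ) = r :=
          hsubb i₁ u2 hxv2 hxu2 (Ne.symm hune2) ⟨e2, heE2, hve2, hue2⟩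
        exact_mod_cast hd1.trans hd2.symm
    · -- regularity gives equality
      rintro ⟨d, hd⟩
      have hall : ∀ ρ ∈ P, ρ = (d:ℝ) := by
        intro ρ hρ
        rw [hP] at hρ
        obtain ⟨e, _, u, _, v, _, _, rfl⟩ := hρ
        rw [hd u, hd v]
        exact Real.sqrt_mul_self (Nat.cast_nonneg d)
      have hPd : P = {(d:ℝ)} := by
        apply Set.eq_singleton_iff_unique_mem.2
        constructor
        · obtain ⟨ρ₀, hρ₀⟩ := hPne
          rw [← hall ρ₀ hρ₀]
          exact hρ₀
        · exact hall
      rw [hPd, csInf_singleton, csSup_singleton]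
      rw [hPd, csInf_singleton] at hpart1
      rw [hPd, csSup_singleton] at hpart2
      exact Or.inl (le_antisymm hpart2 hpart1)
end
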